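/- arXiv:1307.2301 — 3 statements merged into one kernel-verified Lean document; each statement's English description precedes it below -/
import Mathlib

section
/- Let 0<s<1 and m>0. For every μ with 0 ≤ μ < N+2s there exists a constant C>0 such that for every measurable function g on ℝ^N with ‖(1+|x|)^μ g‖_{L^∞(ℝ^N)} < ∞, one has ‖(1+|x|)^μ T_m[g]‖_{L^∞(ℝ^N)} ≤ C‖(1+|x|)^μ g‖_{L^∞(ℝ^N)}. In particular, there exists C>0 with T_m[(1+|x|)^{-μ}](x) ≤ C(1+|x|)^{-μ} for all x∈ℝ^N. -/
open MeasureTheory Filter Set Metric Bornology Topology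

noncomputable section

abbrev EucN (N : ℕ) := EuclideanSpace ℝ (Fin N)

/-- The Fourier transform of a real-valued function on `ℝ^N`. -/
def FT {N : ℕ} (u : EucN N → ℝ) : EucN N → ℂ :=
  VectorFourier.fourierIntegral Real.fourierChar volume (innerₗ (EucN N)) (fun x => (u x : ℂ))

/-- `u ∈ H^{2s}(ℝ^N)`: `u ∈ L²` and `∫ (1+|ξ|^{4s}) |û(ξ)|² < ∞`. -/
def MemH2s {N : ℕ} (s : ℝ) (u : EucN N → ℝ) : Prop :=
  MeasureTheory.MemLp u 2 (volume : Measure (EucN N)) ∧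
    MeasureTheory.Integrable
      (fun ξ : EucN N => (1 + ‖ξ‖ ^ (4 * s)) * ‖FT u ξ‖ ^ 2)

/-- `v = (-Δ)^s u`, defined through the Fourier relation `v̂(ξ) = |ξ|^{2s} û(ξ)`. -/
def IsFracLap {N : ℕ} (s : ℝ) (u v : EucN N → ℝ) : Prop :=
  MeasureTheory.MemLp v 2 (volume : Measure (EucN N)) ∧
    ∀ᵐ ξ : EucN N, FT v ξ = ((‖ξ‖ ^ (2 * s) : ℝ) : ℂ) * FT u ξ

/-- Subcriticality of the exponent `p`. -/
def Subcritical (N : ℕ) (s p : ℝ) : Prop :=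
  1 < p ∧ (2 * s < N → p < ((N : ℝ) + 2 * s) / ((N : ℝ) - 2 * s))

/-- `V ∈ C^{1,α}(ℝ^N) ∩ L^∞(ℝ^N)` with `inf V > 0`. -/
def VCond {N : ℕ} (V : EucN N → ℝ) : Prop :=
  ContDiff ℝ 1 V ∧
    (∃ α : ℝ, 0 < α ∧ α ≤ 1 ∧ ∃ C : NNReal, HolderWith C α.toNNReal (fderiv ℝ V)) ∧
    (∃ M, ∀ x, |V x| ≤ M) ∧ (∃ m, 0 < m ∧ ∀ x, m ≤ V x)

/-- The rescaled ground state `w_λ(x) = λ^{1/(p-1)} w(λ^{1/(2s)} x)`. -/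
def wlam {N : ℕ} (s p : ℝ) (w : EucN N → ℝ) (lam : ℝ) (x : EucN N) : ℝ :=
  lam ^ (1 / (p - 1)) * w ((lam ^ (1 / (2 * s))) • x)

/-- A nondegenerate positive radial ground state of `(-Δ)^s w + w - w^p = 0`. -/
structure IsGroundState (N : ℕ) (s p : ℝ) (w : EucN N → ℝ) : Prop where
  pos : ∀ x, 0 < w x
  radial : ∀ x y : EucN N, ‖x‖ = ‖y‖ → w x = w y
  mem : MemH2s s w
  smooth : ContDiff ℝ 1 w
  eq : ∃ Lw : EucN N → ℝ, IsFracLap s w Lw ∧ ∀ᵐ x : EucN N, Lw x + w x - w x ^ p = 0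
  nondeg : ∀ φ : EucN N → ℝ, MemH2s s φ →
    (∃ Lφ : EucN N → ℝ, IsFracLap s φ Lφ ∧
      ∀ᵐ x : EucN N, Lφ x + φ x - p * w x ^ (p - 1) * φ x = 0) →
    ∃ c : Fin N → ℝ, ∀ᵐ x : EucN N,
      φ x = ∑ j, c j * fderiv ℝ w x (EuclideanSpace.single j (1 : ℝ))
  decay : ∃ c₀, 0 < c₀ ∧ Tendsto (fun x : EucN N => w x * ‖x‖ ^ ((N : ℝ) + 2 * s))
    (cocompact (EucN N)) (𝓝 c₀)

/-- `u` is a (positive, bounded, `H^{2s}`) solution of `ε^{2s}(-Δ)^s u + V u - u^p = 0`. -/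
def SolvesEps {N : ℕ} (s p ε : ℝ) (V u : EucN N → ℝ) : Prop :=
  MemH2s s u ∧ (∃ C, ∀ x, |u x| ≤ C) ∧ (∀ x, 0 < u x) ∧
    ∃ Lu : EucN N → ℝ, IsFracLap s u Lu ∧
      ∀ᵐ x : EucN N, ε ^ (2 * s) * Lu x + V x * u x - u x ^ p = 0

/-- The square of the `H^{2s}` norm. -/
def H2sNormSq {N : ℕ} (s : ℝ) (u : EucN N → ℝ) : ℝ :=
  ∫ ξ : EucN N, (1 + ‖ξ‖ ^ (4 * s)) * ‖FT u ξ‖ ^ 2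



set_option maxHeartbeats 2000000 in
/-- Lemma 2: weighted `L^∞` estimate for `T_m[g] = k_m * g`. -/
theorem stmt7 {N : ℕ} (s m : ℝ) (hs : 0 < s) (hs1 : s < 1) (hm : 0 < m)
    (km : EucN N → ℝ)
    (hkmFT : ∀ ξ : EucN N, FT km ξ = (((‖ξ‖ ^ (2 * s) + m)⁻¹ : ℝ) : ℂ))
    (hkmpos : ∀ x : EucN N, x ≠ 0 → 0 < km x)
    (hkmrad : ∀ x y : EucN N, ‖x‖ = ‖y‖ → km x = km y)
    (hkmint : ∫ x : EucN N, km x = 1 / m)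
    (hnear : ∃ C : ℝ, ∀ x : EucN N, x ≠ 0 → ‖x‖ ≤ 1 →
      |km x| ≤ C * ‖x‖ ^ (-((N : ℝ) - 2 * s)))
    (hfar : ∃ γ : ℝ, 0 < γ ∧
      Tendsto (fun x : EucN N => km x * ‖x‖ ^ ((N : ℝ) + 2 * s))
        (cocompact (EucN N)) (𝓝 γ))
    (μ : ℝ) (hμ0 : 0 ≤ μ) (hμ : μ < (N : ℝ) + 2 * s) :
    ∃ C > (0 : ℝ),
      (∀ g : EucN N → ℝ, Measurable g → ∀ M : ℝ,
        (∀ x, |g x| ≤ M * (1 + ‖x‖) ^ (-μ)) →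
        ∀ x : EucN N, |∫ z : EucN N, km (x - z) * g z| ≤ C * M * (1 + ‖x‖) ^ (-μ)) ∧
      (∀ x : EucN N,
        (∫ z : EucN N, km (x - z) * (1 + ‖z‖) ^ (-μ)) ≤ C * (1 + ‖x‖) ^ (-μ)) := by

  classical
  -- `km` is integrable, since its integral is nonzero
  have hmne : (1 : ℝ) / m ≠ 0 := by positivity
  have hint : Integrable km (volume : Measure (EucN N)) := by
    by_contra h
    rw [MeasureTheory.integral_undef h] at hkmint
    exact hmne hkmint.symm
  rcases Nat.eq_zero_or_pos N with hN0 | hNpos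
  · -- trivial case `N = 0`
    subst hN0
    haveI : Subsingleton (EucN 0) := ⟨fun a b => by
      ext i; exact absurd i.2 (by omega)⟩
    have hx0 : ∀ y : EucN 0, y = (0 : EucN 0) := fun y => Subsingleton.elim _ _
    refine ⟨1 / m + 1, by positivity, ?_, ?_⟩
    · intro g hg M hgM x
      have hM0 : 0 ≤ M := by
        have h := hgM 0
        simp [Real.one_rpow] at h
        exact le_trans (abs_nonneg _) h
      have hgx : |g 0| ≤ M := by
        have h := hgM 0
        simpa [Real.one_rpow] using h
      have hfun : (fun z : EucN 0 => km (x - z) * g z) = fun z : EucN 0 => km z * g 0 := by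
        funext z
        rw [Subsingleton.elim (x - z) z, Subsingleton.elim z 0]
      rw [hfun, MeasureTheory.integral_mul_const, hkmint]
      have hxn : ‖x‖ = 0 := by rw [hx0 x, norm_zero]
      rw [hxn]
      simp only [add_zero, Real.one_rpow, mul_one]
      rw [abs_mul, abs_of_pos (by positivity : (0:ℝ) < 1/m)]
      calc 1 / m * |g 0| ≤ 1 / m * M := by
            exact mul_le_mul_of_nonneg_left hgx (by positivity)
        _ ≤ (1 / m + 1) * M := by nlinarith
    · intro x
      have hfun : (fun z : EucN 0 => km (x - z) * (1 + ‖z‖) ^ (-μ))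
          = fun z : EucN 0 => km z * 1 := by
        funext z
        rw [Subsingleton.elim (x - z) z, hx0 z, norm_zero, add_zero, Real.one_rpow]
      rw [hfun]
      simp only [mul_one]
      rw [hkmint]
      have hxn : ‖x‖ = 0 := by rw [hx0 x, norm_zero]
      rw [hxn]
      simp only [add_zero, Real.one_rpow, mul_one]
      linarith
  · -- main case `N ≥ 1`
    haveI : Nontrivial (EucN N) := by
      refine nontrivial_of_ne (EuclideanSpace.single ⟨0, hNpos⟩ (1 : ℝ)) 0 ?_
      intro h
      have := congrArg (fun v : EucN N => v ⟨0, hNpos⟩) h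
      simp [EuclideanSpace.single_apply] at this
    haveI : NullSingletonClass (volume : Measure (EucN N)) := inferInstance
    set p : ℝ := (N : ℝ) + 2 * s with hp_def
    have hNp : (N : ℝ) < p := by
      have : (0:ℝ) < 2 * s := by linarith
      simp only [hp_def]; linarith
    have hp0 : 0 < p := lt_of_le_of_lt (Nat.cast_nonneg N) hNp
    have hμp : μ < p := hμ
    -- integrable weight of power -p
    have hKint : Integrable (fun z : EucN N => ((1 : ℝ) + ‖z‖) ^ (-p))
        (volume : Measure (EucN N)) := by
      apply integrable_one_add_norm
      rwa [finrank_euclideanSpace_fin]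
    set K : ℝ := ∫ z : EucN N, ((1 : ℝ) + ‖z‖) ^ (-p) with hK_def
    have hK0 : 0 ≤ K := by
      apply MeasureTheory.integral_nonneg
      intro z
      exact Real.rpow_nonneg (by positivity) _
    -- far-field bound
    obtain ⟨γ, hγ, hT⟩ := hfar
    have hev : ∀ᶠ y in cocompact (EucN N), km y * ‖y‖ ^ p < 2 * γ :=
      hT.eventually_lt_const (by linarith)
    rw [Filter.eventually_iff, Filter.mem_cocompact] at hev
    obtain ⟨t, htc, hts⟩ := hev
    obtain ⟨R₀, hR₀⟩ := htc.isBounded.subset_closedBall 0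
    set R : ℝ := max R₀ 1 + 1 with hR_def
    have hR1 : 1 ≤ R := by
      have := le_max_right R₀ 1
      simp only [hR_def]; linarith
    have hRR₀ : R₀ < R := by
      have := le_max_left R₀ 1
      simp only [hR_def]; linarith
    have hRbig : ∀ y : EucN N, R ≤ ‖y‖ → km y ≤ 2 * γ * ‖y‖ ^ (-p) := by
      intro y hy
      have hy0 : 0 < ‖y‖ := lt_of_lt_of_le (by linarith) hy
      have hyt : y ∈ tᶜ := by
        intro hmem
        have := mem_closedBall_zero_iff.mp (hR₀ hmem)
        linarith
      have hlt : km y * ‖y‖ ^ p < 2 * γ := hts hyt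
      have hyp : 0 < ‖y‖ ^ p := Real.rpow_pos_of_pos hy0 p
      rw [Real.rpow_neg hy0.le, ← div_eq_mul_inv]
      rw [le_div_iff₀ hyp]
      exact hlt.le
    -- a.e. nonnegativity of `km (x - ·)`
    have hkm_nn : ∀ x : EucN N, ∀ᵐ z : EucN N, 0 ≤ km (x - z) := by
      intro x
      have hne : ∀ᵐ z : EucN N, z ≠ x := by
        rw [ae_iff]
        simp only [ne_eq, not_not, Set.setOf_eq_eq_singleton]
        exact measure_singleton x
      filter_upwards [hne] with z hz
      exact (hkmpos _ (sub_ne_zero.mpr (Ne.symm hz))).le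
    have hintx : ∀ x : EucN N, Integrable (fun z : EucN N => km (x - z))
        (volume : Measure (EucN N)) := fun x => hint.comp_sub_left x
    have hintval : ∀ x : EucN N, (∫ z : EucN N, km (x - z)) = 1 / m := by
      intro x
      rw [MeasureTheory.integral_sub_left_eq_self km (volume : Measure (EucN N)) x]
      exact hkmint
    -- weight ≤ 1
    have hw1 : ∀ z : EucN N, ((1 : ℝ) + ‖z‖) ^ (-μ) ≤ 1 := fun z =>
      Real.rpow_le_one_of_one_le_of_nonpos (by linarith [norm_nonneg z]) (by linarith)
    have hwnn : ∀ z : EucN N, 0 ≤ ((1 : ℝ) + ‖z‖) ^ (-μ) := fun z =>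
      Real.rpow_nonneg (by positivity) _
    -- integrability of the main integrand
    have hwcont : Continuous (fun z : EucN N => ((1 : ℝ) + ‖z‖) ^ (-μ)) := by
      apply Continuous.rpow_const (by continuity)
      intro z
      left
      positivity
    have hf_int : ∀ x : EucN N,
        Integrable (fun z : EucN N => km (x - z) * ((1 : ℝ) + ‖z‖) ^ (-μ))
          (volume : Measure (EucN N)) := by
      intro x
      apply (hintx x).mono
        ((hintx x).aestronglyMeasurable.mul hwcont.aestronglyMeasurable)
      filter_upwards with z
      simp only [Pi.mul_apply, Real.norm_eq_abs]
      rw [abs_mul, abs_of_nonneg (hwnn z)]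
      exact mul_le_of_le_one_right (abs_nonneg _) (hw1 z)
    -- the constant
    set C : ℝ := (1 / m) * (1 + 2 * R) ^ μ + 2 * γ * (4 : ℝ) ^ p * K
        + (2 : ℝ) ^ μ * (1 / m) with hC_def
    have hC1pos : 0 < (1 / m) * (1 + 2 * R) ^ μ :=
      mul_pos (by positivity) (Real.rpow_pos_of_pos (by linarith) μ)
    have hC2nn : 0 ≤ 2 * γ * (4 : ℝ) ^ p * K := by
      apply mul_nonneg _ hK0
      positivity
    have hC3nn : (0:ℝ) ≤ (2 : ℝ) ^ μ * (1 / m) := by positivity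
    have hCpos : 0 < C := by simp only [hC_def]; linarith
    -- main pointwise estimate
    have key : ∀ x : EucN N,
        (∫ z : EucN N, km (x - z) * ((1 : ℝ) + ‖z‖) ^ (-μ)) ≤ C * (1 + ‖x‖) ^ (-μ) := by
      intro x
      have ha0 : (0:ℝ) ≤ ‖x‖ := norm_nonneg x
      have hax : (0:ℝ) < 1 + ‖x‖ := by linarith
      have haxn : 0 ≤ ((1 : ℝ) + ‖x‖) ^ (-μ) := Real.rpow_nonneg hax.le _
      by_cases hcase : ‖x‖ ≤ 2 * R
      · -- small ‖x‖
        have step1 : (∫ z : EucN N, km (x - z) * ((1 : ℝ) + ‖z‖) ^ (-μ))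
            ≤ ∫ z : EucN N, km (x - z) := by
          apply MeasureTheory.integral_mono_of_nonneg _ (hintx x)
          · filter_upwards [hkm_nn x] with z hz
            exact mul_le_of_le_one_right hz (hw1 z)
          · filter_upwards [hkm_nn x] with z hz
            exact mul_nonneg hz (hwnn z)
        rw [hintval x] at step1
        refine step1.trans ?_
        have h2 : ((1 : ℝ) + ‖x‖) ^ μ ≤ (1 + 2 * R) ^ μ :=
          Real.rpow_le_rpow hax.le (by linarith) hμ0
        have h3 : ((1 : ℝ) + ‖x‖) ^ μ * ((1 : ℝ) + ‖x‖) ^ (-μ) = 1 := by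
          rw [← Real.rpow_add hax, add_neg_cancel, Real.rpow_zero]
        have h4 : (1 : ℝ) / m = (1 / m) * (((1 : ℝ) + ‖x‖) ^ μ * ((1 : ℝ) + ‖x‖) ^ (-μ)) := by
          rw [h3, mul_one]
        rw [h4]
        have h5 : (1 / m) * (((1 : ℝ) + ‖x‖) ^ μ * ((1 : ℝ) + ‖x‖) ^ (-μ))
            ≤ ((1 / m) * (1 + 2 * R) ^ μ) * ((1 : ℝ) + ‖x‖) ^ (-μ) := by
          rw [← mul_assoc]
          apply mul_le_mul_of_nonneg_right _ haxn
          exact mul_le_mul_of_nonneg_left h2 (by positivity)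
        refine h5.trans ?_
        apply mul_le_mul_of_nonneg_right _ haxn
        simp only [hC_def]; linarith
      · -- large ‖x‖
        push_neg at hcase
        have ha1 : (1:ℝ) ≤ ‖x‖ := by linarith
        have ha0' : (0:ℝ) < ‖x‖ := by linarith
        have ha2 : (0:ℝ) < ‖x‖ / 2 := by linarith
        have hax2 : (0:ℝ) < 1 + ‖x‖ / 2 := by linarith
        obtain ⟨c1, hc1_def⟩ : ∃ c1 : ℝ,
            c1 = 2 * γ * (‖x‖ / 2) ^ (-p) * (1 + ‖x‖ / 2) ^ (p - μ) := ⟨_, rfl⟩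
        have hc1nn : 0 ≤ c1 := by
          rw [hc1_def]
          apply mul_nonneg (mul_nonneg (by linarith) (Real.rpow_nonneg ha2.le _))
          exact Real.rpow_nonneg hax2.le _
        have hptw : ∀ᵐ z : EucN N, km (x - z) * ((1 : ℝ) + ‖z‖) ^ (-μ)
            ≤ c1 * ((1 : ℝ) + ‖z‖) ^ (-p) + (1 + ‖x‖ / 2) ^ (-μ) * km (x - z) := by
          filter_upwards [hkm_nn x] with z hz
          by_cases hzs : ‖z‖ ≤ ‖x‖ / 2
          · have hxz : R ≤ ‖x - z‖ := by
              have h6 : ‖x‖ - ‖z‖ ≤ ‖x - z‖ := norm_sub_norm_le x z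
              linarith
            have hxz0 : (0:ℝ) < ‖x - z‖ := by linarith
            have hkb : km (x - z) ≤ 2 * γ * ‖x - z‖ ^ (-p) := hRbig _ hxz
            have h5 : ‖x - z‖ ^ (-p) ≤ (‖x‖ / 2) ^ (-p) := by
              apply Real.rpow_le_rpow_of_nonpos ha2 _ (by linarith)
              linarith [norm_sub_norm_le x z]
            have h6 : km (x - z) ≤ 2 * γ * (‖x‖ / 2) ^ (-p) :=
              hkb.trans (mul_le_mul_of_nonneg_left h5 (by linarith))
            have h7 : ((1 : ℝ) + ‖z‖) ^ (-μ)
                ≤ (1 + ‖x‖ / 2) ^ (p - μ) * ((1 : ℝ) + ‖z‖) ^ (-p) := by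
              have hz1 : (0:ℝ) < 1 + ‖z‖ := by linarith [norm_nonneg z]
              have e : ((1 : ℝ) + ‖z‖) ^ (-μ)
                  = ((1 : ℝ) + ‖z‖) ^ (p - μ) * ((1 : ℝ) + ‖z‖) ^ (-p) := by
                rw [← Real.rpow_add hz1]
                congr 1
                ring
              rw [e]
              apply mul_le_mul_of_nonneg_right _ (Real.rpow_nonneg hz1.le _)
              exact Real.rpow_le_rpow hz1.le (by linarith) (by linarith)
            have h8 : km (x - z) * ((1 : ℝ) + ‖z‖) ^ (-μ) ≤ c1 * ((1 : ℝ) + ‖z‖) ^ (-p) := by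
              calc km (x - z) * ((1 : ℝ) + ‖z‖) ^ (-μ)
                  ≤ (2 * γ * (‖x‖ / 2) ^ (-p)) *
                      ((1 + ‖x‖ / 2) ^ (p - μ) * ((1 : ℝ) + ‖z‖) ^ (-p)) := by
                    apply mul_le_mul h6 h7 (hwnn z) _
                    apply mul_nonneg (by linarith) (Real.rpow_nonneg ha2.le _)
                _ = c1 * ((1 : ℝ) + ‖z‖) ^ (-p) := by rw [hc1_def]; ring
            have h9 : 0 ≤ (1 + ‖x‖ / 2) ^ (-μ) * km (x - z) :=
              mul_nonneg (Real.rpow_nonneg hax2.le _) hz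
            linarith
          · push_neg at hzs
            have h8 : ((1 : ℝ) + ‖z‖) ^ (-μ) ≤ (1 + ‖x‖ / 2) ^ (-μ) :=
              Real.rpow_le_rpow_of_nonpos hax2 (by linarith) (by linarith)
            have h9 : km (x - z) * ((1 : ℝ) + ‖z‖) ^ (-μ)
                ≤ (1 + ‖x‖ / 2) ^ (-μ) * km (x - z) := by
              rw [mul_comm ((1 + ‖x‖ / 2) ^ (-μ)) (km (x - z))]
              exact mul_le_mul_of_nonneg_left h8 hz
            have h10 : 0 ≤ c1 * ((1 : ℝ) + ‖z‖) ^ (-p) :=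
              mul_nonneg hc1nn (Real.rpow_nonneg (by positivity) _)
            linarith
        have hg1int : Integrable (fun z : EucN N => c1 * ((1 : ℝ) + ‖z‖) ^ (-p))
            (volume : Measure (EucN N)) := hKint.const_mul c1
        have hg2int : Integrable
            (fun z : EucN N => (1 + ‖x‖ / 2) ^ (-μ) * km (x - z))
            (volume : Measure (EucN N)) := (hintx x).const_mul _
        have step1 : (∫ z : EucN N, km (x - z) * ((1 : ℝ) + ‖z‖) ^ (-μ))
            ≤ ∫ z : EucN N, (c1 * ((1 : ℝ) + ‖z‖) ^ (-p)
                + (1 + ‖x‖ / 2) ^ (-μ) * km (x - z)) := by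
          apply MeasureTheory.integral_mono_of_nonneg _ (hg1int.add hg2int) hptw
          filter_upwards [hkm_nn x] with z hz
          exact mul_nonneg hz (hwnn z)
        rw [MeasureTheory.integral_add hg1int hg2int,
          MeasureTheory.integral_const_mul, MeasureTheory.integral_const_mul,
          hintval x] at step1
        refine step1.trans ?_
        -- now the elementary estimates
        have e1 : (‖x‖ / 2) ^ (-p) ≤ 4 ^ p * ((1 : ℝ) + ‖x‖) ^ (-p) := by
          have h11 : ((1 : ℝ) + ‖x‖) / 4 ≤ ‖x‖ / 2 := by linarith
          have h12 : (0:ℝ) < ((1 : ℝ) + ‖x‖) / 4 := by linarith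
          have h13 : (‖x‖ / 2) ^ (-p) ≤ (((1 : ℝ) + ‖x‖) / 4) ^ (-p) :=
            Real.rpow_le_rpow_of_nonpos h12 h11 (by linarith)
          refine h13.trans_eq ?_
          rw [Real.div_rpow hax.le (by norm_num : (0:ℝ) ≤ 4),
            Real.rpow_neg (by norm_num : (0:ℝ) ≤ 4), div_eq_mul_inv, inv_inv]
          ring
        have e2 : ((1:ℝ) + ‖x‖ / 2) ^ (p - μ) ≤ ((1 : ℝ) + ‖x‖) ^ (p - μ) :=
          Real.rpow_le_rpow hax2.le (by linarith) (by linarith)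
        have e3 : ((1 : ℝ) + ‖x‖) ^ (-p) * ((1 : ℝ) + ‖x‖) ^ (p - μ)
            = ((1 : ℝ) + ‖x‖) ^ (-μ) := by
          rw [← Real.rpow_add hax]
          congr 1
          ring
        have e4 : ((1:ℝ) + ‖x‖ / 2) ^ (-μ) ≤ 2 ^ μ * ((1 : ℝ) + ‖x‖) ^ (-μ) := by
          have h11 : ((1 : ℝ) + ‖x‖) / 2 ≤ 1 + ‖x‖ / 2 := by linarith
          have h12 : (0:ℝ) < ((1 : ℝ) + ‖x‖) / 2 := by linarith
          have h13 : ((1:ℝ) + ‖x‖ / 2) ^ (-μ) ≤ (((1 : ℝ) + ‖x‖) / 2) ^ (-μ) :=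
            Real.rpow_le_rpow_of_nonpos h12 h11 (by linarith)
          refine h13.trans_eq ?_
          rw [Real.div_rpow hax.le (by norm_num : (0:ℝ) ≤ 2),
            Real.rpow_neg (by norm_num : (0:ℝ) ≤ 2), div_eq_mul_inv, inv_inv]
          ring
        have t1 : c1 * K ≤ 2 * γ * 4 ^ p * K * ((1 : ℝ) + ‖x‖) ^ (-μ) := by
          have h14 : c1 ≤ 2 * γ * 4 ^ p * ((1 : ℝ) + ‖x‖) ^ (-μ) := by
            have h15 : c1 ≤ 2 * γ * (4 ^ p * ((1 : ℝ) + ‖x‖) ^ (-p))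
                * ((1 : ℝ) + ‖x‖) ^ (p - μ) := by
              rw [hc1_def]
              apply mul_le_mul _ e2 (Real.rpow_nonneg hax2.le _)
              · apply mul_nonneg (by linarith)
                apply mul_nonneg (Real.rpow_nonneg (by norm_num) _)
                  (Real.rpow_nonneg hax.le _)
              · exact mul_le_mul_of_nonneg_left e1 (by linarith)
            refine h15.trans_eq ?_
            calc 2 * γ * (4 ^ p * ((1 : ℝ) + ‖x‖) ^ (-p)) * ((1 : ℝ) + ‖x‖) ^ (p - μ)
                = 2 * γ * 4 ^ p * (((1 : ℝ) + ‖x‖) ^ (-p) * ((1 : ℝ) + ‖x‖) ^ (p - μ)) := by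
                  ring
              _ = 2 * γ * 4 ^ p * ((1 : ℝ) + ‖x‖) ^ (-μ) := by rw [e3]
          calc c1 * K ≤ (2 * γ * 4 ^ p * ((1 : ℝ) + ‖x‖) ^ (-μ)) * K :=
                mul_le_mul_of_nonneg_right h14 hK0
            _ = 2 * γ * 4 ^ p * K * ((1 : ℝ) + ‖x‖) ^ (-μ) := by ring
        have t2 : ((1:ℝ) + ‖x‖ / 2) ^ (-μ) * (1 / m)
            ≤ 2 ^ μ * (1 / m) * ((1 : ℝ) + ‖x‖) ^ (-μ) := by
          calc ((1:ℝ) + ‖x‖ / 2) ^ (-μ) * (1 / m)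
              ≤ (2 ^ μ * ((1 : ℝ) + ‖x‖) ^ (-μ)) * (1 / m) :=
                mul_le_mul_of_nonneg_right e4 (by positivity)
            _ = 2 ^ μ * (1 / m) * ((1 : ℝ) + ‖x‖) ^ (-μ) := by ring
        have t3 : 0 ≤ (1 / m) * (1 + 2 * R) ^ μ * ((1 : ℝ) + ‖x‖) ^ (-μ) :=
          mul_nonneg hC1pos.le haxn
        simp only [hC_def]
        rw [add_mul, add_mul]
        linarith
    refine ⟨C, hCpos, ?_, key⟩
    intro g hg M hgM x
    have hM0 : 0 ≤ M := by
      have h := hgM 0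
      simp [Real.one_rpow] at h
      exact le_trans (abs_nonneg _) h
    have ha0 : (0:ℝ) ≤ ‖x‖ := norm_nonneg x
    have hax : (0:ℝ) < 1 + ‖x‖ := by linarith
    calc |∫ z : EucN N, km (x - z) * g z|
        ≤ ∫ z : EucN N, |km (x - z) * g z| := by
          have h := MeasureTheory.norm_integral_le_integral_norm
            (μ := (volume : Measure (EucN N))) (fun z : EucN N => km (x - z) * g z)
          simpa only [Real.norm_eq_abs] using h
      _ ≤ ∫ z : EucN N, M * (km (x - z) * ((1 : ℝ) + ‖z‖) ^ (-μ)) := by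
          apply MeasureTheory.integral_mono_of_nonneg
            (Filter.Eventually.of_forall fun z => abs_nonneg _)
            ((hf_int x).const_mul M)
          filter_upwards [hkm_nn x] with z hz
          rw [abs_mul, abs_of_nonneg hz]
          calc km (x - z) * |g z| ≤ km (x - z) * (M * ((1 : ℝ) + ‖z‖) ^ (-μ)) :=
                mul_le_mul_of_nonneg_left (hgM z) hz
            _ = M * (km (x - z) * ((1 : ℝ) + ‖z‖) ^ (-μ)) := by ring
      _ = M * ∫ z : EucN N, km (x - z) * ((1 : ℝ) + ‖z‖) ^ (-μ) :=
          MeasureTheory.integral_const_mul M _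
      _ ≤ M * (C * (1 + ‖x‖) ^ (-μ)) := mul_le_mul_of_nonneg_left (key x) hM0
      _ = C * M * (1 + ‖x‖) ^ (-μ) := by ring
end
end

section
/- Let 0<s<1, p subcritical, V∈C^{1,α}(ℝ^N)∩L^∞(ℝ^N) with inf V>0, and w a nondegenerate positive radial ground state of (-Δ)^s w + w - w^p = 0. Fix N/2 < μ < (N+2s)/2 and points q_1,…,q_k with R := min_{i≠j}|q_i-q_j| ≫ 1 and λ_i = V(εq_i). Then the error E = Σ_{j=1}^k(λ_j - V(εx))w_{λ_j}(x-q_j) + (Σ_{j=1}^k w_{λ_j}(x-q_j))^p - Σ_{j=1}^k w_{λ_j}(x-q_j)^p satisfies ‖E‖_Y ≤ C ε^{min(2s,1)} + C R^{μ-N-2s} for a constant C independent of ε and of the points q_i. -/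
open MeasureTheory Filter Set Metric Bornology Topology

noncomputable section

/-- The weight `ρ(x) = Σ_i (1+|x-q_i|)^{-μ}`. -/
def rho {N k : ℕ} (μ : ℝ) (q : Fin k → EucN N) (x : EucN N) : ℝ :=
  ∑ i, (1 + ‖x - q i‖) ^ (-μ)

/-- The ansatz `W_q = Σ_i w_{λ_i}(· - q_i)`, `λ_i = V(ε q_i)`. -/
def Wq {N k : ℕ} (s p ε : ℝ) (w V : EucN N → ℝ) (q : Fin k → EucN N) (x : EucN N) : ℝ :=
  ∑ i, wlam s p w (V (ε • q i)) (x - q i)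

/-- `Z_{ij}(x) = ∂_j w_λ(x - q_i)`. -/
def Zf {N : ℕ} (s p : ℝ) (w : EucN N → ℝ) (lam : ℝ) (qi : EucN N) (j : Fin N)
    (x : EucN N) : ℝ :=
  fderiv ℝ (wlam s p w lam) (x - qi) (EuclideanSpace.single j (1 : ℝ))

/-- The error term `E = Σ_j (λ_j - V(εx)) w_j + (Σ_j w_j)^p - Σ_j w_j^p`. -/
def Efun {N k : ℕ} (s p ε : ℝ) (w V : EucN N → ℝ) (q : Fin k → EucN N) (x : EucN N) : ℝ :=
  (∑ j, (V (ε • q j) - V (ε • x)) * wlam s p w (V (ε • q j)) (x - q j))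
    + (∑ j, wlam s p w (V (ε • q j)) (x - q j)) ^ p
    - ∑ j, (wlam s p w (V (ε • q j)) (x - q j)) ^ p

/-- The nonlinear term `N(φ) = (W_q + φ)_+^p - p W_q^{p-1} φ - W_q^p`. -/
def Nfun {N : ℕ} (p : ℝ) (Wv φ : EucN N → ℝ) (x : EucN N) : ℝ :=
  max (Wv x + φ x) 0 ^ p - p * Wv x ^ (p - 1) * φ x - Wv x ^ p



/-- interpolation: `min A B ≤ A^(1-σ) B^σ`. -/
lemma aux_min_le_interp {A B σ : ℝ} (hA : 0 ≤ A) (hB : 0 ≤ B) (hσ0 : 0 ≤ σ) (hσ1 : σ ≤ 1) :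
    min A B ≤ A ^ (1 - σ) * B ^ σ := by
  rcases eq_or_lt_of_le hA with hA0 | hA0
  · have : min A B ≤ 0 := by rw [← hA0]; exact min_le_left _ _
    exact this.trans (by positivity)
  rcases eq_or_lt_of_le hB with hB0 | hB0
  · have : min A B ≤ 0 := by rw [← hB0]; exact min_le_right _ _
    exact this.trans (by positivity)
  rcases le_total A B with h | h
  · rw [min_eq_left h]
    calc A = A ^ (1 - σ) * A ^ σ := by
          rw [← Real.rpow_add hA0, show (1:ℝ) - σ + σ = 1 by ring, Real.rpow_one]
      _ ≤ A ^ (1 - σ) * B ^ σ :=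
          mul_le_mul_of_nonneg_left (Real.rpow_le_rpow hA h hσ0) (by positivity)
  · rw [min_eq_right h]
    calc B = B ^ (1 - σ) * B ^ σ := by
          rw [← Real.rpow_add hB0, show (1:ℝ) - σ + σ = 1 by ring, Real.rpow_one]
      _ ≤ A ^ (1 - σ) * B ^ σ :=
          mul_le_mul_of_nonneg_right (Real.rpow_le_rpow hB h (by linarith)) (by positivity)

/-- superadditivity of `x ↦ x^p`, two variables -/
lemma aux_rpow_superadd {pp a b : ℝ} (hp : 1 ≤ pp) (ha : 0 ≤ a) (hb : 0 ≤ b) :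
    a ^ pp + b ^ pp ≤ (a + b) ^ pp := by
  have key : ∀ x y : ℝ, 0 ≤ x → 0 ≤ y → x ^ pp ≤ x * (x + y) ^ (pp - 1) := by
    intro x y hx hy
    rcases eq_or_lt_of_le hx with hx0 | hx0
    · rw [← hx0, Real.zero_rpow (by linarith), zero_mul]
    · have h1 : x * x ^ (pp - 1) = x ^ pp := by
        rw [mul_comm, ← Real.rpow_add_one (ne_of_gt hx0), show pp - 1 + 1 = pp by ring]
      calc x ^ pp = x * x ^ (pp - 1) := h1.symm
        _ ≤ x * (x + y) ^ (pp - 1) :=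
            mul_le_mul_of_nonneg_left
              (Real.rpow_le_rpow hx (by linarith) (by linarith)) hx
  rcases eq_or_lt_of_le (by positivity : (0:ℝ) ≤ a + b) with hab | hab
  · have ha0 : a = 0 := by linarith
    have hb0 : b = 0 := by linarith
    simp [ha0, hb0, Real.zero_rpow (show pp ≠ 0 by linarith)]
  · have h2 : (a + b) ^ (pp - 1) * (a + b) = (a + b) ^ pp := by
      rw [← Real.rpow_add_one (ne_of_gt hab), show pp - 1 + 1 = pp by ring]
    calc a ^ pp + b ^ pp ≤ a * (a+b) ^ (pp-1) + b * (b+a) ^ (pp-1) :=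
          add_le_add (key a b ha hb) (key b a hb ha)
      _ = (a + b) ^ (pp - 1) * (a + b) := by rw [add_comm b a]; ring
      _ = (a + b) ^ pp := h2

/-- superadditivity of `x ↦ x^p`, finite sums -/
lemma aux_sum_rpow_le {ι : Type*} {pp : ℝ} (hp : 1 ≤ pp) (t : Finset ι) (f : ι → ℝ)
    (hf : ∀ i, 0 ≤ f i) : ∑ i ∈ t, f i ^ pp ≤ (∑ i ∈ t, f i) ^ pp := by
  classical
  induction t using Finset.induction_on with
  | empty => simp [Real.zero_rpow (show pp ≠ 0 by linarith)]
  | @insert a t' hnotmem ih =>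
      rw [Finset.sum_insert hnotmem, Finset.sum_insert hnotmem]
      calc f a ^ pp + ∑ i ∈ t', f i ^ pp ≤ f a ^ pp + (∑ i ∈ t', f i) ^ pp := by linarith
        _ ≤ (f a + ∑ i ∈ t', f i) ^ pp :=
            aux_rpow_superadd hp (hf a) (Finset.sum_nonneg fun i _ => hf i)

/-- mean value inequality for rpow -/
lemma aux_rpow_sub_le {pp m A : ℝ} (hp : 1 ≤ pp) (hm : 0 ≤ m) (hmA : m ≤ A) :
    A ^ pp - m ^ pp ≤ pp * A ^ (pp - 1) * (A - m) := by
  have hA : 0 ≤ A := hm.trans hmA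
  have hmvt := Convex.norm_image_sub_le_of_norm_hasDerivWithin_le
    (f := fun x : ℝ => x ^ pp) (f' := fun x : ℝ => pp * x ^ (pp - 1))
    (s := Icc (0:ℝ) A) (C := pp * A ^ (pp - 1)) (x := m) (y := A)
    (fun x _ => (Real.hasDerivAt_rpow_const (Or.inr hp)).hasDerivWithinAt)
    (fun x hx => by
      rw [Real.norm_eq_abs, abs_of_nonneg (mul_nonneg (by linarith) (Real.rpow_nonneg hx.1 _))]
      exact mul_le_mul_of_nonneg_left (Real.rpow_le_rpow hx.1 hx.2 (by linarith))
        (by linarith))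
    (convex_Icc 0 A) ⟨hm, hmA⟩ ⟨hA, le_refl A⟩
  have h2 : |A ^ pp - m ^ pp| ≤ pp * A ^ (pp - 1) * (A - m) := by
    have h3 := hmvt
    rw [Real.norm_eq_abs, Real.norm_eq_abs,
      abs_of_nonneg (by linarith : (0:ℝ) ≤ A - m)] at h3
    exact h3
  exact (le_abs_self _).trans h2

/-- the weight interaction inequality -/
lemma aux_weight_ineq {a b μ δ α R : ℝ} (ha : 1 ≤ a) (hab : a ≤ b) (hR : 0 < R)
    (hRb : R ≤ 2 * b) (hα : 0 ≤ α) (hμ : 0 ≤ μ) (hδ : 0 ≤ δ) :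
    a ^ (-α) * b ^ (-(μ + δ)) ≤ 2 ^ δ * R ^ (-δ) * a ^ (-μ) := by
  have ha0 : (0:ℝ) < a := by linarith
  have hb1 : (1:ℝ) ≤ b := ha.trans hab
  have hb0 : (0:ℝ) < b := by linarith
  have step1 : b ^ (-δ) ≤ 2 ^ δ * R ^ (-δ) := by
    have h1 : R ^ (-δ) ≥ (2 * b) ^ (-δ) :=
      Real.rpow_le_rpow_of_nonpos hR hRb (by linarith)
    have h2 : (2 * b) ^ (-δ) = 2 ^ (-δ) * b ^ (-δ) :=
      Real.mul_rpow (by norm_num) hb0.le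
    have h3 : (2:ℝ) ^ δ * 2 ^ (-δ) = 1 := by
      rw [← Real.rpow_add (by norm_num : (0:ℝ) < 2)]; norm_num
    calc b ^ (-δ) = 2 ^ δ * (2 ^ (-δ) * b ^ (-δ)) := by
          rw [← mul_assoc, h3, one_mul]
      _ = 2 ^ δ * (2 * b) ^ (-δ) := by rw [h2]
      _ ≤ 2 ^ δ * R ^ (-δ) := by
          exact mul_le_mul_of_nonneg_left h1 (by positivity)
  have step2 : a ^ (-α) * b ^ (-μ) ≤ a ^ (-μ) := by
    rcases le_total μ α with h | h
    · have h1 : a ^ (-α) ≤ a ^ (-μ) :=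
        Real.rpow_le_rpow_of_exponent_le ha (by linarith)
      have h2 : b ^ (-μ) ≤ 1 :=
        Real.rpow_le_one_of_one_le_of_nonpos hb1 (by linarith)
      calc a ^ (-α) * b ^ (-μ) ≤ a ^ (-μ) * 1 :=
            mul_le_mul h1 h2 (by positivity) (by positivity)
        _ = a ^ (-μ) := by ring
    · have h1 : b ^ (-μ) ≤ b ^ (α - μ) :=
        Real.rpow_le_rpow_of_exponent_le hb1 (by linarith)
      have h2 : b ^ (α - μ) ≤ a ^ (α - μ) := by
        rcases eq_or_lt_of_le h with h' | h'
        · simp [← h']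
        · exact Real.rpow_le_rpow_of_nonpos ha0 hab (by linarith)
      calc a ^ (-α) * b ^ (-μ) ≤ a ^ (-α) * a ^ (α - μ) :=
            mul_le_mul_of_nonneg_left (h1.trans h2) (by positivity)
        _ = a ^ (-μ) := by rw [← Real.rpow_add ha0]; ring_nf
  have hbsplit : b ^ (-(μ + δ)) = b ^ (-μ) * b ^ (-δ) := by
    rw [← Real.rpow_add hb0]; ring_nf
  calc a ^ (-α) * b ^ (-(μ + δ)) = (a ^ (-α) * b ^ (-μ)) * b ^ (-δ) := by
        rw [hbsplit]; ring
    _ ≤ a ^ (-μ) * (2 ^ δ * R ^ (-δ)) :=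
        mul_le_mul step2 step1 (by positivity) (by positivity)
    _ = 2 ^ δ * R ^ (-δ) * a ^ (-μ) := by ring

/-- `V` satisfying `VCond` is globally Lipschitz. -/
lemma vcond_lipschitz {N : ℕ} {V : EucN N → ℝ} (hV : VCond V) :
    ∃ L : ℝ, 0 ≤ L ∧ ∀ a b : EucN N, |V a - V b| ≤ L * ‖a - b‖ := by
  obtain ⟨hC1, ⟨α, hα0, hα1, Ch, hHold⟩, ⟨M, hM⟩, -⟩ := hV
  have hM0 : 0 ≤ M := le_trans (abs_nonneg _) (hM 0)
  have hCh0 : (0:ℝ) ≤ (Ch:ℝ) := Ch.coe_nonneg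
  have hdiff : ∀ z : EucN N, DifferentiableAt ℝ V z :=
    fun z => (hC1.differentiable one_ne_zero).differentiableAt
  have hD : ∀ x : EucN N, ‖fderiv ℝ V x‖ ≤ 4 * M + 2 * Ch := by
    intro x
    by_contra hcon
    push_neg at hcon
    have h1 : 2 * M + (Ch:ℝ) < ‖fderiv ℝ V x‖ := by linarith
    obtain ⟨u, hu1, hu2⟩ := (fderiv ℝ V x).exists_lt_apply_of_lt_opNorm h1
    have hmvt := Convex.norm_image_sub_le_of_norm_fderiv_le'
      (𝕜 := ℝ) (f := V) (φ := fderiv ℝ V x) (s := closedBall x 1) (C := (Ch:ℝ))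
      (x := x) (y := x + u) (fun z _ => hdiff z)
      (fun z hz => by
        have h2 := hHold.dist_le z x
        rw [dist_eq_norm] at h2
        have h3 : dist z x ^ ((α.toNNReal : ℝ)) ≤ 1 :=
          Real.rpow_le_one dist_nonneg (mem_closedBall.mp hz) (α.toNNReal.coe_nonneg)
        calc ‖fderiv ℝ V z - fderiv ℝ V x‖ ≤ (Ch:ℝ) * dist z x ^ ((α.toNNReal:ℝ)) := h2
          _ ≤ (Ch:ℝ) * 1 := mul_le_mul_of_nonneg_left h3 hCh0
          _ = (Ch:ℝ) := mul_one _)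
      (convex_closedBall x 1) (mem_closedBall_self zero_le_one)
      (by rw [mem_closedBall, dist_self_add_left]; exact hu1.le)
    rw [add_sub_cancel_left] at hmvt
    have h4 : ‖(fderiv ℝ V x) u‖ ≤
        ‖V (x + u) - V x‖ + ‖V (x + u) - V x - (fderiv ℝ V x) u‖ := by
      have h5 := norm_sub_le (V (x + u) - V x) (V (x + u) - V x - (fderiv ℝ V x) u)
      simpa using h5
    have h6 : ‖V (x + u) - V x‖ ≤ 2 * M := by
      rw [Real.norm_eq_abs]
      have := abs_sub (V (x + u)) (V x)
      have := hM (x + u); have := hM x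
      linarith
    have h7 : (Ch:ℝ) * ‖u‖ ≤ (Ch:ℝ) := mul_le_of_le_one_right hCh0 hu1.le
    linarith
  refine ⟨4 * M + 2 * Ch, by positivity, fun a b => ?_⟩
  have := Convex.norm_image_sub_le_of_norm_fderiv_le (𝕜 := ℝ) (f := V) (s := Set.univ)
    (fun z _ => hdiff z) (fun z _ => hD z) convex_univ (Set.mem_univ b) (Set.mem_univ a)
  simpa [Real.norm_eq_abs] using this

/-- A ground state has uniform polynomial decay. -/
lemma decay_bound {N : ℕ} {s p : ℝ} {w : EucN N → ℝ} (hs : 0 < s)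
    (hw : IsGroundState N s p w) :
    ∃ Cw : ℝ, 0 ≤ Cw ∧ ∀ y : EucN N, w y ≤ Cw * (1 + ‖y‖) ^ (-((N:ℝ) + 2 * s)) := by
  obtain ⟨c₀, hc₀, hlim⟩ := hw.decay
  set ν : ℝ := (N:ℝ) + 2 * s with hν
  have hν0 : (0:ℝ) ≤ ν := by positivity
  have hev : ∀ᶠ y in cocompact (EucN N), w y * ‖y‖ ^ ν < c₀ + 1 :=
    hlim.eventually_lt_const (by linarith)
  obtain ⟨K, hK, hKsub⟩ := Filter.mem_cocompact.mp hev
  obtain ⟨r, hr⟩ := hK.isBounded.subset_closedBall 0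
  set r' : ℝ := max r 1 with hr'
  have hr'1 : (1:ℝ) ≤ r' := le_max_right r 1
  obtain ⟨C0, hC0⟩ := (isCompact_closedBall (0 : EucN N) r').exists_bound_of_continuousOn
    hw.smooth.continuous.continuousOn
  have h0mem : (0 : EucN N) ∈ closedBall (0 : EucN N) r' :=
    mem_closedBall_self (by linarith)
  have hC00 : 0 ≤ C0 := le_trans (norm_nonneg _) (hC0 0 h0mem)
  refine ⟨max (C0 * (1 + r') ^ ν) ((c₀ + 1) * 2 ^ ν),
    le_trans (mul_nonneg hC00 (Real.rpow_nonneg (by linarith) _)) (le_max_left _ _),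
    fun y => ?_⟩
  by_cases hy : y ∈ closedBall (0 : EucN N) r'
  · have hyr : ‖y‖ ≤ r' := mem_closedBall_zero_iff.mp hy
    have h1 : w y ≤ C0 := by
      have := hC0 y hy
      rw [Real.norm_eq_abs] at this
      exact le_trans (le_abs_self _) this
    have hbase : (0:ℝ) < 1 + ‖y‖ := by positivity
    have hkey : (1:ℝ) ≤ (1 + r') ^ ν * (1 + ‖y‖) ^ (-ν) := by
      have h2 : (1 + ‖y‖) ^ ν ≤ (1 + r') ^ ν :=
        Real.rpow_le_rpow (by positivity) (by linarith) hν0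
      have h3 : (1 + ‖y‖) ^ ν * (1 + ‖y‖) ^ (-ν) = 1 := by
        rw [← Real.rpow_add hbase]; simp
      calc (1:ℝ) = (1 + ‖y‖) ^ ν * (1 + ‖y‖) ^ (-ν) := h3.symm
        _ ≤ (1 + r') ^ ν * (1 + ‖y‖) ^ (-ν) :=
            mul_le_mul_of_nonneg_right h2 (Real.rpow_nonneg hbase.le _)
    calc w y ≤ C0 := h1
      _ = C0 * 1 := (mul_one _).symm
      _ ≤ C0 * ((1 + r') ^ ν * (1 + ‖y‖) ^ (-ν)) := mul_le_mul_of_nonneg_left hkey hC00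
      _ = C0 * (1 + r') ^ ν * (1 + ‖y‖) ^ (-ν) := by ring
      _ ≤ max (C0 * (1 + r') ^ ν) ((c₀ + 1) * 2 ^ ν) * (1 + ‖y‖) ^ (-ν) :=
          mul_le_mul_of_nonneg_right (le_max_left _ _) (Real.rpow_nonneg hbase.le _)
  · rw [mem_closedBall_zero_iff] at hy
    push_neg at hy
    have h1y : (1:ℝ) ≤ ‖y‖ := le_of_lt (lt_of_le_of_lt hr'1 hy)
    have hyK : y ∉ K := by
      intro hmem
      have h2 := mem_closedBall_zero_iff.mp (hr hmem)
      have h3 : ‖y‖ ≤ r' := h2.trans (le_max_left r 1)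
      linarith
    have hwy : w y * ‖y‖ ^ ν < c₀ + 1 := hKsub hyK
    have hy0 : (0:ℝ) < ‖y‖ := by linarith
    have hpow : (0:ℝ) < ‖y‖ ^ ν := Real.rpow_pos_of_pos hy0 _
    have h2 : w y ≤ (c₀ + 1) * ‖y‖ ^ (-ν) := by
      have h2' : w y ≤ (c₀ + 1) / ‖y‖ ^ ν := (le_div_iff₀ hpow).mpr hwy.le
      rw [div_eq_mul_inv] at h2'
      rwa [Real.rpow_neg hy0.le]
    have h3 : ‖y‖ ^ (-ν) ≤ 2 ^ ν * (1 + ‖y‖) ^ (-ν) := by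
      have h4 : (2 * ‖y‖) ^ (-ν) ≤ (1 + ‖y‖) ^ (-ν) :=
        Real.rpow_le_rpow_of_nonpos (by positivity) (by linarith) (by linarith)
      have h5 : (2 * ‖y‖) ^ (-ν) = 2 ^ (-ν) * ‖y‖ ^ (-ν) :=
        Real.mul_rpow (by norm_num) hy0.le
      have h6 : (2:ℝ) ^ ν * 2 ^ (-ν) = 1 := by
        rw [← Real.rpow_add (by norm_num : (0:ℝ) < 2)]; simp
      calc ‖y‖ ^ (-ν) = 2 ^ ν * (2 ^ (-ν) * ‖y‖ ^ (-ν)) := by rw [← mul_assoc, h6, one_mul]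
        _ = 2 ^ ν * (2 * ‖y‖) ^ (-ν) := by rw [h5]
        _ ≤ 2 ^ ν * (1 + ‖y‖) ^ (-ν) :=
            mul_le_mul_of_nonneg_left h4 (Real.rpow_nonneg (by norm_num) _)
    calc w y ≤ (c₀ + 1) * ‖y‖ ^ (-ν) := h2
      _ ≤ (c₀ + 1) * (2 ^ ν * (1 + ‖y‖) ^ (-ν)) :=
          mul_le_mul_of_nonneg_left h3 (by linarith)
      _ = (c₀ + 1) * 2 ^ ν * (1 + ‖y‖) ^ (-ν) := by ring
      _ ≤ max (C0 * (1 + r') ^ ν) ((c₀ + 1) * 2 ^ ν) * (1 + ‖y‖) ^ (-ν) :=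
          mul_le_mul_of_nonneg_right (le_max_right _ _) (Real.rpow_nonneg (by positivity) _)

set_option maxHeartbeats 2000000

/-- The error estimate: `‖E‖_Y ≤ C ε^{min(2s,1)} + C R^{μ-N-2s}`. -/
theorem stmt16 {N : ℕ} (s p : ℝ) (hs : 0 < s) (hs1 : s < 1) (hp : Subcritical N s p)
    (V : EucN N → ℝ) (hV : VCond V)
    (w : EucN N → ℝ) (hw : IsGroundState N s p w)
    (k : ℕ) (hk : 1 ≤ k)
    (μ : ℝ) (hμ1 : (N : ℝ) / 2 < μ) (hμ2 : μ < ((N : ℝ) + 2 * s) / 2) :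
    ∃ C > (0 : ℝ), ∃ R₀ > (0 : ℝ), ∃ ε₀ > (0 : ℝ),
      ∀ (ε R : ℝ) (q : Fin k → EucN N),
        0 < ε → ε < ε₀ → R₀ ≤ R →
        (∀ i j, i ≠ j → R ≤ ‖q i - q j‖) →
        ∀ x, |Efun s p ε w V q x|
          ≤ C * (ε ^ min (2 * s) 1 + R ^ (μ - (N : ℝ) - 2 * s)) * rho μ q x := by
  classical
  have hp1 : 1 < p := hp.1
  obtain ⟨L, hL0, hLip⟩ := vcond_lipschitz hV
  obtain ⟨Cw, hCw0, hCwb⟩ := decay_bound hs hw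
  obtain ⟨hVC1, hVH, ⟨M, hM⟩, ⟨mv, hmv0, hmv⟩⟩ := hV
  have hM0 : 0 ≤ M := le_trans (abs_nonneg _) (hM 0)
  set ν : ℝ := (N:ℝ) + 2 * s with hνdef
  have hν0 : (0:ℝ) < ν := by positivity
  have hμ0 : 0 ≤ μ := le_trans (by positivity : (0:ℝ) ≤ (N:ℝ)/2) hμ1.le
  have hμν2 : μ < ν / 2 := by rw [hνdef]; linarith [hμ2]
  have hμν : μ < ν := by linarith
  set σ : ℝ := min (2*s) 1 with hσdef
  have hσ0 : 0 < σ := lt_min (by linarith) one_pos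
  have hσ1 : σ ≤ 1 := min_le_right _ _
  -- rescaling constants
  set c : ℝ := (min mv 1) ^ (1 / (2*s)) with hcdef
  have hminpos : 0 < min mv 1 := lt_min hmv0 one_pos
  have hc0 : 0 < c := Real.rpow_pos_of_pos hminpos _
  have hc1 : c ≤ 1 :=
    Real.rpow_le_one hminpos.le (min_le_right _ _)
      (le_of_lt (one_div_pos.mpr (by linarith)))
  set cM : ℝ := (max M 1) ^ (1 / (p - 1)) with hcMdef
  have hcM0 : 0 < cM := Real.rpow_pos_of_pos (lt_of_lt_of_le one_pos (le_max_right _ _)) _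
  set Cw' : ℝ := cM * Cw * c ^ (-ν) with hCw'def
  have hCw'0 : 0 ≤ Cw' := by
    rw [hCw'def]
    exact mul_nonneg (mul_nonneg hcM0.le hCw0) (Real.rpow_nonneg hc0.le _)
  -- uniform bound for the rescaled bumps
  have hwlam : ∀ lam : ℝ, mv ≤ lam → lam ≤ M → ∀ y : EucN N,
      0 ≤ wlam s p w lam y ∧ wlam s p w lam y ≤ Cw' * (1 + ‖y‖) ^ (-ν) := by
    intro lam hlam hlamM y
    have hlam0 : 0 < lam := lt_of_lt_of_le hmv0 hlam
    constructor
    · exact mul_nonneg (Real.rpow_nonneg hlam0.le _) (hw.pos _).le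
    · show lam ^ (1/(p-1)) * w ((lam ^ (1/(2*s))) • y) ≤ Cw' * (1 + ‖y‖) ^ (-ν)
      have hsc0 : (0:ℝ) ≤ lam ^ (1/(2*s)) * ‖y‖ :=
        mul_nonneg (Real.rpow_nonneg hlam0.le _) (norm_nonneg y)
      have hnorm : ‖(lam ^ (1/(2*s))) • y‖ = lam ^ (1/(2*s)) * ‖y‖ := by
        rw [norm_smul, Real.norm_eq_abs, abs_of_nonneg (Real.rpow_nonneg hlam0.le _)]
      have hw1 : w ((lam ^ (1/(2*s))) • y) ≤ Cw * (1 + lam ^ (1/(2*s)) * ‖y‖) ^ (-ν) := by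
        have h := hCwb ((lam ^ (1/(2*s))) • y)
        rw [hνdef]; rwa [hnorm] at h
      have hclam : c ≤ lam ^ (1/(2*s)) := by
        rw [hcdef]
        exact Real.rpow_le_rpow hminpos.le (le_trans (min_le_left _ _) hlam)
          (le_of_lt (one_div_pos.mpr (by linarith)))
      have hbase : c * (1 + ‖y‖) ≤ 1 + lam ^ (1/(2*s)) * ‖y‖ := by
        have h1 : c * ‖y‖ ≤ lam ^ (1/(2*s)) * ‖y‖ :=
          mul_le_mul_of_nonneg_right hclam (norm_nonneg y)
        nlinarith [norm_nonneg y]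
      have h2 : (1 + lam ^ (1/(2*s)) * ‖y‖) ^ (-ν) ≤ (c * (1 + ‖y‖)) ^ (-ν) :=
        Real.rpow_le_rpow_of_nonpos (mul_pos hc0 (by positivity)) hbase (by linarith)
      have h3 : (c * (1 + ‖y‖)) ^ (-ν) = c ^ (-ν) * (1 + ‖y‖) ^ (-ν) :=
        Real.mul_rpow hc0.le (by positivity)
      have h4 : lam ^ (1/(p-1)) ≤ cM := by
        rw [hcMdef]
        exact Real.rpow_le_rpow hlam0.le (le_trans hlamM (le_max_left _ _))
          (le_of_lt (one_div_pos.mpr (by linarith)))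
      calc lam ^ (1/(p-1)) * w ((lam ^ (1/(2*s))) • y)
          ≤ cM * (Cw * (c ^ (-ν) * (1 + ‖y‖) ^ (-ν))) := by
            refine mul_le_mul h4 ?_ (hw.pos _).le hcM0.le
            calc w ((lam ^ (1/(2*s))) • y) ≤ Cw * (1 + lam ^ (1/(2*s)) * ‖y‖) ^ (-ν) := hw1
              _ ≤ Cw * (c ^ (-ν) * (1 + ‖y‖) ^ (-ν)) := by
                  rw [← h3]; exact mul_le_mul_of_nonneg_left h2 hCw0
        _ = Cw' * (1 + ‖y‖) ^ (-ν) := by rw [hCw'def]; ring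
  -- the constants
  set C₁ : ℝ := (2*M) ^ (1 - σ) * L ^ σ * Cw' with hC₁def
  set C₂ : ℝ := p * (k:ℝ) ^ (p - 1) * (k:ℝ) * Cw' ^ p * 2 ^ (ν - μ) with hC₂def
  have hC₁0 : 0 ≤ C₁ := by
    rw [hC₁def]
    exact mul_nonneg (mul_nonneg (Real.rpow_nonneg (by linarith) _)
      (Real.rpow_nonneg hL0 _)) hCw'0
  have hC₂0 : 0 ≤ C₂ := by
    rw [hC₂def]
    exact mul_nonneg (mul_nonneg (mul_nonneg (mul_nonneg (by linarith)
      (Real.rpow_nonneg (Nat.cast_nonneg k) _)) (Nat.cast_nonneg k))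
      (Real.rpow_nonneg hCw'0 _)) (Real.rpow_nonneg (by norm_num) _)
  have hCmax : (0:ℝ) < max C₁ C₂ + 1 := by
    have := le_trans hC₁0 (le_max_left C₁ C₂); linarith
  refine ⟨max C₁ C₂ + 1, hCmax, 1, one_pos, 1, one_pos, fun ε R q hε hε1 hR hsep x => ?_⟩
  have hR0 : (0:ℝ) < R := by linarith
  rw [show μ - (N:ℝ) - 2*s = μ - ν by rw [hνdef]; ring]
  have hεσ : (0:ℝ) ≤ ε ^ σ := Real.rpow_nonneg hε.le _
  have hRμν : (0:ℝ) ≤ R ^ (μ - ν) := Real.rpow_nonneg hR0.le _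
  have hrho0 : 0 ≤ rho μ q x :=
    Finset.sum_nonneg fun i _ => Real.rpow_nonneg (by positivity) _
  have hrho_term : ∀ j : Fin k, (1 + ‖x - q j‖) ^ (-μ) ≤ rho μ q x := fun j =>
    Finset.single_le_sum (f := fun i => (1 + ‖x - q i‖) ^ (-μ))
      (fun i _ => Real.rpow_nonneg (by positivity) _) (Finset.mem_univ j)
  rcases Nat.eq_zero_or_pos N with hN0 | hNpos
  · -- trivial case N = 0
    subst hN0
    have hsub : ∀ u v : EucN 0, u = v := fun u v => by ext i; exact i.elim0
    rcases eq_or_lt_of_le hk with hk1 | hk2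
    · -- k = 1
      have hEz : Efun s p ε w V q x = 0 := by
        subst hk1
        unfold Efun
        rw [Fin.sum_univ_one, Fin.sum_univ_one, Fin.sum_univ_one, hsub (q 0) x]
        ring
      rw [hEz, abs_zero]
      exact mul_nonneg (mul_nonneg hCmax.le (by linarith)) hrho0
    · exfalso
      have h01 : (⟨0, by omega⟩ : Fin k) ≠ (⟨1, by omega⟩ : Fin k) := by
        intro h; simpa using congrArg Fin.val h
      have hs01 := hsep _ _ h01
      rw [hsub (q ⟨0, by omega⟩) (q ⟨1, by omega⟩), sub_self, norm_zero] at hs01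
      linarith
  · -- main case N ≥ 1
    have hN1 : (1:ℝ) ≤ (N:ℝ) := by exact_mod_cast hNpos
    have hexp : σ - ν ≤ -μ := by
      have h1 : σ ≤ (1 + 2*s)/2 := by
        rcases le_total (2*s) 1 with h | h
        · rw [hσdef, min_eq_left h]; linarith
        · rw [hσdef, min_eq_right h]; linarith
      rw [hνdef] at hμν2 ⊢
      linarith
    have hlamj : ∀ j : Fin k, mv ≤ V (ε • q j) ∧ V (ε • q j) ≤ M :=
      fun j => ⟨hmv _, le_trans (le_abs_self _) (hM _)⟩
    -- Term 1, generic
    have hT1 : ∀ a : Fin k → ℝ, (∀ j, 0 ≤ a j) →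
        (∀ j, a j ≤ Cw' * (1 + ‖x - q j‖) ^ (-ν)) →
        |∑ j, (V (ε • q j) - V (ε • x)) * a j| ≤ C₁ * ε ^ σ * rho μ q x := by
      intro a ha0 hab
      have hterm : ∀ j : Fin k, |(V (ε • q j) - V (ε • x)) * a j|
          ≤ C₁ * ε ^ σ * (1 + ‖x - q j‖) ^ (-μ) := by
        intro j
        have ht0 : (0:ℝ) ≤ ‖x - q j‖ := norm_nonneg _
        have htb : (0:ℝ) < 1 + ‖x - q j‖ := by linarith
        have hΔ1 : |V (ε • q j) - V (ε • x)| ≤ 2 * M := by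
          have h := abs_sub (V (ε • q j)) (V (ε • x))
          have h2 := hM (ε • q j); have h3 := hM (ε • x)
          linarith
        have hΔ2 : |V (ε • q j) - V (ε • x)| ≤ L * (ε * ‖x - q j‖) := by
          have h1 := hLip (ε • q j) (ε • x)
          rw [← smul_sub, norm_smul, Real.norm_eq_abs, abs_of_pos hε, norm_sub_rev] at h1
          exact h1
        have hLε0 : (0:ℝ) ≤ L * (ε * ‖x - q j‖) :=
          mul_nonneg hL0 (mul_nonneg hε.le ht0)
        have hmin : |V (ε • q j) - V (ε • x)| ≤ min (2*M) (L * (ε * ‖x - q j‖)) :=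
          le_min hΔ1 hΔ2
        have hinterp : min (2*M) (L * (ε * ‖x - q j‖))
            ≤ (2*M) ^ (1-σ) * (L * (ε * ‖x - q j‖)) ^ σ :=
          aux_min_le_interp (by linarith) hLε0 hσ0.le hσ1
        have hLε : (L * (ε * ‖x - q j‖)) ^ σ ≤ L ^ σ * ε ^ σ * (1 + ‖x - q j‖) ^ σ := by
          rw [Real.mul_rpow hL0 (mul_nonneg hε.le ht0), Real.mul_rpow hε.le ht0]
          have h5 : ‖x - q j‖ ^ σ ≤ (1 + ‖x - q j‖) ^ σ :=
            Real.rpow_le_rpow ht0 (by linarith) hσ0.le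
          calc L ^ σ * (ε ^ σ * ‖x - q j‖ ^ σ)
              ≤ L ^ σ * (ε ^ σ * (1 + ‖x - q j‖) ^ σ) :=
                mul_le_mul_of_nonneg_left
                  (mul_le_mul_of_nonneg_left h5 hεσ) (Real.rpow_nonneg hL0 _)
            _ = L ^ σ * ε ^ σ * (1 + ‖x - q j‖) ^ σ := by ring
        have hsplit : (1 + ‖x - q j‖) ^ σ * (1 + ‖x - q j‖) ^ (-ν)
            = (1 + ‖x - q j‖) ^ (σ - ν) := by
          rw [← Real.rpow_add htb]; ring_nf
        have hmono : (1 + ‖x - q j‖) ^ (σ - ν) ≤ (1 + ‖x - q j‖) ^ (-μ) :=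
          Real.rpow_le_rpow_of_exponent_le (by linarith) hexp
        calc |(V (ε • q j) - V (ε • x)) * a j|
            = |V (ε • q j) - V (ε • x)| * a j := by
              rw [abs_mul, abs_of_nonneg (ha0 j)]
          _ ≤ min (2*M) (L * (ε * ‖x - q j‖)) * (Cw' * (1 + ‖x - q j‖) ^ (-ν)) :=
              mul_le_mul hmin (hab j) (ha0 j) (le_min (by linarith) hLε0)
          _ ≤ ((2*M) ^ (1-σ) * (L * (ε * ‖x - q j‖)) ^ σ)
                * (Cw' * (1 + ‖x - q j‖) ^ (-ν)) :=
              mul_le_mul_of_nonneg_right hinterp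
                (mul_nonneg hCw'0 (Real.rpow_nonneg htb.le _))
          _ ≤ ((2*M) ^ (1-σ) * (L ^ σ * ε ^ σ * (1 + ‖x - q j‖) ^ σ))
                * (Cw' * (1 + ‖x - q j‖) ^ (-ν)) :=
              mul_le_mul_of_nonneg_right
                (mul_le_mul_of_nonneg_left hLε (Real.rpow_nonneg (by linarith) _))
                (mul_nonneg hCw'0 (Real.rpow_nonneg htb.le _))
          _ = C₁ * ε ^ σ * ((1 + ‖x - q j‖) ^ σ * (1 + ‖x - q j‖) ^ (-ν)) := by
              rw [hC₁def]; ring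
          _ = C₁ * ε ^ σ * (1 + ‖x - q j‖) ^ (σ - ν) := by rw [hsplit]
          _ ≤ C₁ * ε ^ σ * (1 + ‖x - q j‖) ^ (-μ) :=
              mul_le_mul_of_nonneg_left hmono (mul_nonneg hC₁0 hεσ)
      calc |∑ j, (V (ε • q j) - V (ε • x)) * a j|
          ≤ ∑ j, |(V (ε • q j) - V (ε • x)) * a j| := Finset.abs_sum_le_sum_abs _ _
        _ ≤ ∑ j, C₁ * ε ^ σ * (1 + ‖x - q j‖) ^ (-μ) :=
            Finset.sum_le_sum fun j _ => hterm j
        _ = C₁ * ε ^ σ * rho μ q x := by rw [← Finset.mul_sum]; rfl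
    -- Terms 2 and 3, generic
    have hT23 : ∀ a : Fin k → ℝ, (∀ j, 0 ≤ a j) →
        (∀ j, a j ≤ Cw' * (1 + ‖x - q j‖) ^ (-ν)) →
        (∑ j, a j) ^ p - ∑ j, a j ^ p ≤ C₂ * R ^ (μ - ν) * rho μ q x := by
      intro a ha0 hab
      have hne : (Finset.univ : Finset (Fin k)).Nonempty := ⟨⟨0, hk⟩, Finset.mem_univ _⟩
      obtain ⟨i₀, -, hi₀⟩ := Finset.exists_max_image Finset.univ a hne
      have hsum0 : 0 ≤ ∑ j, a j := Finset.sum_nonneg fun i _ => ha0 i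
      have hmA : a i₀ ≤ ∑ j, a j :=
        Finset.single_le_sum (fun i _ => ha0 i) (Finset.mem_univ i₀)
      have hstep : (∑ j, a j) ^ p - ∑ j, a j ^ p ≤ (∑ j, a j) ^ p - (a i₀) ^ p := by
        have h := Finset.single_le_sum (f := fun j => a j ^ p)
          (fun i _ => Real.rpow_nonneg (ha0 i) _) (Finset.mem_univ i₀)
        linarith
      have hMVT : (∑ j, a j) ^ p - (a i₀) ^ p
          ≤ p * (∑ j, a j) ^ (p-1) * (∑ j, a j - a i₀) :=
        aux_rpow_sub_le hp1.le (ha0 i₀) hmA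
      have hAk : ∑ j, a j ≤ (k:ℝ) * a i₀ := by
        calc ∑ j, a j ≤ ∑ _j : Fin k, a i₀ :=
              Finset.sum_le_sum fun i _ => hi₀ i (Finset.mem_univ i)
          _ = (k:ℝ) * a i₀ := by
              rw [Finset.sum_const, Finset.card_univ, Fintype.card_fin, nsmul_eq_mul]
      have hApm1 : (∑ j, a j) ^ (p-1) ≤ (k:ℝ) ^ (p-1) * (a i₀) ^ (p-1) := by
        calc (∑ j, a j) ^ (p-1) ≤ ((k:ℝ) * a i₀) ^ (p-1) :=
              Real.rpow_le_rpow hsum0 hAk (by linarith)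
          _ = (k:ℝ) ^ (p-1) * (a i₀) ^ (p-1) :=
              Real.mul_rpow (Nat.cast_nonneg k) (ha0 i₀)
      have hsum_erase : ∑ j, a j - a i₀ = ∑ j ∈ Finset.univ.erase i₀, a j := by
        rw [← Finset.add_sum_erase _ a (Finset.mem_univ i₀)]; ring
      have key : ∀ A B u v : ℝ, 0 ≤ A → 0 ≤ B → 1 ≤ u → u ≤ v → R ≤ 2*v →
          A ≤ Cw' * u ^ (-ν) → B ≤ Cw' * v ^ (-ν) → u ^ (-μ) ≤ rho μ q x →
          A ^ (p-1) * B ≤ Cw' ^ p * 2 ^ (ν-μ) * R ^ (μ-ν) * rho μ q x := by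
        intro A B u v hA hB hu1 huv hRv hAu hBv hurho
        have hu0 : (0:ℝ) < u := by linarith
        have h1 : A ^ (p-1) ≤ (Cw' * u ^ (-ν)) ^ (p-1) :=
          Real.rpow_le_rpow hA hAu (by linarith)
        have h2 : (Cw' * u ^ (-ν)) ^ (p-1) = Cw' ^ (p-1) * (u ^ (-ν)) ^ (p-1) :=
          Real.mul_rpow hCw'0 (Real.rpow_nonneg hu0.le _)
        have h3 : (u ^ (-ν)) ^ (p-1) = u ^ (-(ν * (p-1))) := by
          rw [← Real.rpow_mul hu0.le]; congr 1; ring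
        have h4 : A ^ (p-1) * B ≤ (Cw' ^ (p-1) * u ^ (-(ν*(p-1)))) * (Cw' * v ^ (-ν)) := by
          refine mul_le_mul ?_ hBv hB ?_
          · rw [← h3, ← h2]; exact h1
          · exact mul_nonneg (Real.rpow_nonneg hCw'0 _) (Real.rpow_nonneg hu0.le _)
        have hCw'p : Cw' ^ (p-1) * Cw' = Cw' ^ p := by
          rcases eq_or_lt_of_le hCw'0 with h0 | h0
          · rw [← h0, Real.zero_rpow (ne_of_gt (show (0:ℝ) < p - 1 by linarith)),
              Real.zero_rpow (ne_of_gt (show (0:ℝ) < p by linarith)), zero_mul]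
          · rw [← Real.rpow_add_one (ne_of_gt h0), show p - 1 + 1 = p by ring]
        have h6 := aux_weight_ineq (a := u) (b := v) (μ := μ) (δ := ν - μ)
          (α := ν*(p-1)) (R := R) hu1 huv hR0 hRv
          (mul_nonneg hν0.le (by linarith)) hμ0 (by linarith)
        rw [show μ + (ν - μ) = ν by ring] at h6
        rw [show -(ν - μ) = μ - ν by ring] at h6
        calc A ^ (p-1) * B ≤ (Cw' ^ (p-1) * u ^ (-(ν*(p-1)))) * (Cw' * v ^ (-ν)) := h4
          _ = (Cw' ^ (p-1) * Cw') * (u ^ (-(ν*(p-1))) * v ^ (-ν)) := by ring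
          _ = Cw' ^ p * (u ^ (-(ν*(p-1))) * v ^ (-ν)) := by rw [hCw'p]
          _ ≤ Cw' ^ p * (2 ^ (ν-μ) * R ^ (μ-ν) * u ^ (-μ)) :=
              mul_le_mul_of_nonneg_left h6 (Real.rpow_nonneg hCw'0 _)
          _ ≤ Cw' ^ p * (2 ^ (ν-μ) * R ^ (μ-ν) * rho μ q x) := by
              refine mul_le_mul_of_nonneg_left
                (mul_le_mul_of_nonneg_left hurho ?_) (Real.rpow_nonneg hCw'0 _)
              exact mul_nonneg (Real.rpow_nonneg (by norm_num) _) hRμν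
          _ = Cw' ^ p * 2 ^ (ν-μ) * R ^ (μ-ν) * rho μ q x := by ring
      have hpair : ∀ j ∈ Finset.univ.erase i₀,
          (a i₀) ^ (p-1) * a j ≤ Cw' ^ p * 2 ^ (ν-μ) * R ^ (μ-ν) * rho μ q x := by
        intro j hj
        have hji : j ≠ i₀ := Finset.ne_of_mem_erase hj
        have htnn0 : (0:ℝ) ≤ ‖x - q i₀‖ := norm_nonneg _
        have htnnj : (0:ℝ) ≤ ‖x - q j‖ := norm_nonneg _
        have hRsep : R ≤ ‖x - q i₀‖ + ‖x - q j‖ := by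
          calc R ≤ ‖q i₀ - q j‖ := hsep i₀ j (Ne.symm hji)
            _ = ‖(x - q j) - (x - q i₀)‖ := by
                rw [show (x - q j) - (x - q i₀) = q i₀ - q j from by abel]
            _ ≤ ‖x - q j‖ + ‖x - q i₀‖ := norm_sub_le _ _
            _ = ‖x - q i₀‖ + ‖x - q j‖ := by ring
        rcases le_total (1 + ‖x - q i₀‖) (1 + ‖x - q j‖) with hcase | hcase
        · exact key (a i₀) (a j) (1 + ‖x - q i₀‖) (1 + ‖x - q j‖) (ha0 i₀) (ha0 j)
            (by linarith) hcase (by linarith) (hab i₀) (hab j) (hrho_term i₀)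
        · refine key (a i₀) (a j) (1 + ‖x - q j‖) (1 + ‖x - q i₀‖) (ha0 i₀) (ha0 j)
            (by linarith) hcase (by linarith) ?_ ?_ (hrho_term j)
          · calc a i₀ ≤ Cw' * (1 + ‖x - q i₀‖) ^ (-ν) := hab i₀
              _ ≤ Cw' * (1 + ‖x - q j‖) ^ (-ν) :=
                  mul_le_mul_of_nonneg_left
                    (Real.rpow_le_rpow_of_nonpos (by linarith) hcase (by linarith)) hCw'0
          · calc a j ≤ a i₀ := hi₀ j (Finset.mem_univ j)
              _ ≤ Cw' * (1 + ‖x - q i₀‖) ^ (-ν) := hab i₀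
      calc (∑ j, a j) ^ p - ∑ j, a j ^ p ≤ (∑ j, a j) ^ p - (a i₀) ^ p := hstep
        _ ≤ p * (∑ j, a j) ^ (p-1) * (∑ j, a j - a i₀) := hMVT
        _ ≤ p * ((k:ℝ) ^ (p-1) * (a i₀) ^ (p-1)) * (∑ j ∈ Finset.univ.erase i₀, a j) := by
            rw [← hsum_erase]
            refine mul_le_mul_of_nonneg_right
              (mul_le_mul_of_nonneg_left hApm1 (by linarith)) (by linarith)
        _ = p * (k:ℝ) ^ (p-1) * (∑ j ∈ Finset.univ.erase i₀, (a i₀) ^ (p-1) * a j) := by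
            rw [← Finset.mul_sum]; ring
        _ ≤ p * (k:ℝ) ^ (p-1)
              * (∑ _j ∈ Finset.univ.erase i₀, Cw' ^ p * 2 ^ (ν-μ) * R ^ (μ-ν) * rho μ q x) := by
            refine mul_le_mul_of_nonneg_left (Finset.sum_le_sum hpair) ?_
            exact mul_nonneg (by linarith) (Real.rpow_nonneg (Nat.cast_nonneg k) _)
        _ ≤ C₂ * R ^ (μ-ν) * rho μ q x := by
            rw [Finset.sum_const, nsmul_eq_mul]
            have hcard : ((Finset.univ.erase i₀).card : ℝ) ≤ (k:ℝ) := by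
              have h := Finset.card_erase_le (a := i₀) (s := (Finset.univ : Finset (Fin k)))
              have h2 : (Finset.univ : Finset (Fin k)).card = k := by simp
              exact_mod_cast le_trans h (le_of_eq h2)
            have hconst0 : (0:ℝ) ≤ Cw' ^ p * 2 ^ (ν-μ) * R ^ (μ-ν) * rho μ q x :=
              mul_nonneg (mul_nonneg (mul_nonneg (Real.rpow_nonneg hCw'0 _)
                (Real.rpow_nonneg (by norm_num) _)) hRμν) hrho0
            calc p * (k:ℝ) ^ (p-1)
                  * (((Finset.univ.erase i₀).card : ℝ)
                      * (Cw' ^ p * 2 ^ (ν-μ) * R ^ (μ-ν) * rho μ q x))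
                ≤ p * (k:ℝ) ^ (p-1)
                    * ((k:ℝ) * (Cw' ^ p * 2 ^ (ν-μ) * R ^ (μ-ν) * rho μ q x)) :=
                  mul_le_mul_of_nonneg_left (mul_le_mul_of_nonneg_right hcard hconst0)
                    (mul_nonneg (by linarith) (Real.rpow_nonneg (Nat.cast_nonneg k) _))
              _ = C₂ * R ^ (μ-ν) * rho μ q x := by rw [hC₂def]; ring
    -- assemble
    have ha0 : ∀ j : Fin k, 0 ≤ wlam s p w (V (ε • q j)) (x - q j) :=
      fun j => (hwlam _ (hlamj j).1 (hlamj j).2 _).1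
    have hab : ∀ j : Fin k, wlam s p w (V (ε • q j)) (x - q j)
        ≤ Cw' * (1 + ‖x - q j‖) ^ (-ν) :=
      fun j => (hwlam _ (hlamj j).1 (hlamj j).2 _).2
    have h1 := hT1 (fun j => wlam s p w (V (ε • q j)) (x - q j)) ha0 hab
    have h2 := hT23 (fun j => wlam s p w (V (ε • q j)) (x - q j)) ha0 hab
    have hlow := aux_sum_rpow_le hp1.le Finset.univ
      (fun j => wlam s p w (V (ε • q j)) (x - q j)) ha0
    have hEsplit : Efun s p ε w V q x
        = (∑ j, (V (ε • q j) - V (ε • x)) * wlam s p w (V (ε • q j)) (x - q j))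
          + ((∑ j, wlam s p w (V (ε • q j)) (x - q j)) ^ p
             - ∑ j, (wlam s p w (V (ε • q j)) (x - q j)) ^ p) := by
      unfold Efun; ring
    rw [hEsplit]
    have habs2 : |(∑ j, wlam s p w (V (ε • q j)) (x - q j)) ^ p
        - ∑ j, (wlam s p w (V (ε • q j)) (x - q j)) ^ p|
        ≤ C₂ * R ^ (μ - ν) * rho μ q x := by
      rw [abs_of_nonneg (by linarith)]
      exact h2
    calc |(∑ j, (V (ε • q j) - V (ε • x)) * wlam s p w (V (ε • q j)) (x - q j))
          + ((∑ j, wlam s p w (V (ε • q j)) (x - q j)) ^ p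
             - ∑ j, (wlam s p w (V (ε • q j)) (x - q j)) ^ p)|
        ≤ |∑ j, (V (ε • q j) - V (ε • x)) * wlam s p w (V (ε • q j)) (x - q j)|
          + |(∑ j, wlam s p w (V (ε • q j)) (x - q j)) ^ p
             - ∑ j, (wlam s p w (V (ε • q j)) (x - q j)) ^ p| := abs_add_le _ _
      _ ≤ C₁ * ε ^ σ * rho μ q x + C₂ * R ^ (μ - ν) * rho μ q x := add_le_add h1 habs2
      _ ≤ (max C₁ C₂ + 1) * (ε ^ σ + R ^ (μ - ν)) * rho μ q x := by
          have e1 : C₁ ≤ max C₁ C₂ + 1 := by have := le_max_left C₁ C₂; linarith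
          have e2 : C₂ ≤ max C₁ C₂ + 1 := by have := le_max_right C₁ C₂; linarith
          have t1 : C₁ * ε ^ σ * rho μ q x ≤ (max C₁ C₂ + 1) * ε ^ σ * rho μ q x :=
            mul_le_mul_of_nonneg_right (mul_le_mul_of_nonneg_right e1 hεσ) hrho0
          have t2 : C₂ * R ^ (μ - ν) * rho μ q x
              ≤ (max C₁ C₂ + 1) * R ^ (μ - ν) * rho μ q x :=
            mul_le_mul_of_nonneg_right (mul_le_mul_of_nonneg_right e2 hRμν) hrho0
          have hring : (max C₁ C₂ + 1) * (ε ^ σ + R ^ (μ - ν)) * rho μ q x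
              = (max C₁ C₂ + 1) * ε ^ σ * rho μ q x
                + (max C₁ C₂ + 1) * R ^ (μ - ν) * rho μ q x := by ring
          linarith
end
end

section
/- Let 0<s<1, p>1 with p(N+2s)>N, and let w be a positive radial continuous function on ℝ^N with w∈L^∞ and lim_{|x|→∞} w(x)|x|^{N+2s} = c_0 > 0. Fix λ_i, λ_j > 0 and set w_λ(x) = λ^{1/(p-1)}w(λ^{1/(2s)}x). Then, as |q_i-q_j| → ∞, ∫_{ℝ^N} w_{λ_j}(x-q_j)^p w_{λ_i}(x-q_i) dx = c_0 λ_i^{1/(p-1)-(N+2s)/(2s)} λ_j^{p/(p-1)-N/(2s)} (∫_{ℝ^N}w^p) · |q_i-q_j|^{-(N+2s)} · (1+o(1)). -/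
open MeasureTheory Filter Set Metric Bornology Topology

noncomputable section

lemma tail_tendsto_zero {N : ℕ} {g : EucN N → ℝ} (hg : Integrable g) :
    Tendsto (fun ρ : ℝ => ∫ y in {y : EucN N | ρ ≤ ‖y‖}, g y) atTop (𝓝 0) := by
  have hm : ∀ ρ : ℝ, MeasurableSet {y : EucN N | ρ ≤ ‖y‖} := fun ρ =>
    (isClosed_le continuous_const continuous_norm).measurableSet
  have h := tendsto_setIntegral_of_antitone (μ := volume) (f := g) hm
    (fun a b hab y hy => le_trans hab hy) ⟨0, hg.integrableOn⟩
  have hempty : (⋂ ρ : ℝ, {y : EucN N | ρ ≤ ‖y‖}) = (∅ : Set (EucN N)) := by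
    ext y
    simp only [mem_iInter, mem_setOf_eq, mem_empty_iff_false, iff_false, not_forall, not_le]
    exact ⟨‖y‖ + 1, by linarith⟩
  rwa [hempty, Measure.restrict_empty, integral_zero_measure] at h

lemma ptwise {N : ℕ} {w : EucN N → ℝ} {c₀ r : ℝ}
    (hdecay : Tendsto (fun x : EucN N => w x * ‖x‖ ^ r) (cocompact (EucN N)) (𝓝 c₀))
    (hr : 0 ≤ r) {μ : ℝ} (hμ : 0 < μ) (b : EucN N) :
    Tendsto (fun q : EucN N => w (b - μ • q) * ‖q‖ ^ r)
      (comap (fun q : EucN N => ‖q‖) atTop) (𝓝 (c₀ * (μ ^ r)⁻¹)) := by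
  set l := comap (fun q : EucN N => ‖q‖) atTop with hl
  have ht : Tendsto (fun q : EucN N => ‖q‖) l atTop := tendsto_comap
  have hzlower : ∀ q : EucN N, μ * ‖q‖ + -‖b‖ ≤ ‖b - μ • q‖ := by
    intro q
    have h1 := norm_sub_norm_le (μ • q) b
    rw [norm_smul, Real.norm_eq_abs, abs_of_pos hμ, norm_sub_rev] at h1
    linarith
  have hzupper : ∀ q : EucN N, ‖b - μ • q‖ ≤ μ * ‖q‖ + ‖b‖ := by
    intro q
    have h1 := norm_sub_le b (μ • q)
    rw [norm_smul, Real.norm_eq_abs, abs_of_pos hμ] at h1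
    linarith
  have hz : Tendsto (fun q : EucN N => ‖b - μ • q‖) l atTop := by
    apply tendsto_atTop_mono hzlower
    exact tendsto_atTop_add_const_right _ _ (ht.const_mul_atTop hμ)
  have hzc : Tendsto (fun q : EucN N => b - μ • q) l (cocompact (EucN N)) := by
    rw [← Metric.cobounded_eq_cocompact, ← comap_norm_atTop, tendsto_comap_iff]
    exact hz
  have h1 : Tendsto (fun q : EucN N => w (b - μ • q) * ‖b - μ • q‖ ^ r) l (𝓝 c₀) :=
    hdecay.comp hzc
  have hφ : ∀ a : ℝ, Tendsto (fun t : ℝ => t / (μ * t + a)) atTop (𝓝 μ⁻¹) := by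
    intro a
    have h0 : Tendsto (fun t : ℝ => (μ + a / t)⁻¹) atTop (𝓝 μ⁻¹) := by
      have hμ' : Tendsto (fun t : ℝ => μ + a / t) atTop (𝓝 μ) := by
        simpa using tendsto_const_nhds.add ((tendsto_const_nhds (x := a)).div_atTop tendsto_id)
      exact hμ'.inv₀ hμ.ne'
    apply h0.congr'
    filter_upwards [eventually_gt_atTop (|a| / μ), eventually_gt_atTop 0] with t h1 h2
    have habs : |a| < μ * t := by rw [div_lt_iff₀ hμ] at h1; linarith [h1]
    have hd : 0 < μ * t + a := by have := neg_abs_le a; linarith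
    field_simp
  have hratio : Tendsto (fun q : EucN N => ‖q‖ / ‖b - μ • q‖) l (𝓝 μ⁻¹) := by
    apply tendsto_of_tendsto_of_tendsto_of_le_of_le' ((hφ ‖b‖).comp ht) ((hφ (-‖b‖)).comp ht)
    · filter_upwards [hz.eventually_gt_atTop 0] with q hq
      have h2 := hzupper q
      exact div_le_div_of_nonneg_left (norm_nonneg q) hq h2
    · filter_upwards [ht.eventually_gt_atTop ((‖b‖ + 1) / μ)] with q hq
      have hpos : 0 < μ * ‖q‖ + -‖b‖ := by
        rw [div_lt_iff₀ hμ] at hq; nlinarith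
      exact div_le_div_of_nonneg_left (norm_nonneg q) hpos (hzlower q)
  have h2 : Tendsto (fun q : EucN N => (‖q‖ / ‖b - μ • q‖) ^ r) l (𝓝 (μ⁻¹ ^ r)) :=
    hratio.rpow_const (Or.inr hr)
  have h3 := h1.mul h2
  rw [← Real.inv_rpow hμ.le]
  apply h3.congr'
  filter_upwards [hz.eventually_gt_atTop 0] with q hq
  have hne : (‖b - μ • q‖ : ℝ) ^ r ≠ 0 := (Real.rpow_pos_of_pos hq r).ne'
  rw [Real.div_rpow (norm_nonneg _) (norm_nonneg _)]
  field_simp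

lemma bound_K {N : ℕ} {w : EucN N → ℝ} {c₀ r : ℝ} (hr : 0 < r) (hc₀ : 0 < c₀)
    (hwpos : ∀ x, 0 < w x) (hwbdd : ∃ M, ∀ x, |w x| ≤ M)
    (hdecay : Tendsto (fun x : EucN N => w x * ‖x‖ ^ r) (cocompact (EucN N)) (𝓝 c₀)) :
    ∃ K : ℝ, 0 < K ∧ ∀ z : EucN N, w z ≤ K * ((1 + ‖z‖) ^ r)⁻¹ := by
  obtain ⟨M, hM⟩ := hwbdd
  have hM0 : 0 < M := lt_of_lt_of_le (hwpos 0) (le_trans (le_abs_self _) (hM 0))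
  have hev : ∀ᶠ z in cocompact (EucN N), w z * ‖z‖ ^ r < c₀ + 1 :=
    hdecay.eventually_lt_const (lt_add_one c₀)
  obtain ⟨C, hCc, hCsub⟩ := mem_cocompact.mp hev
  obtain ⟨R, hR⟩ := hCc.isBounded.subset_closedBall 0
  set R' := max R 1 with hR'
  have hR'1 : (1 : ℝ) ≤ R' := le_max_right _ _
  refine ⟨max (M * (1 + R') ^ r) ((c₀ + 1) * 2 ^ r), by positivity, fun z => ?_⟩
  by_cases hcase : ‖z‖ ≤ R'
  · have h1 : w z ≤ M := le_trans (le_abs_self _) (hM z)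
    have h2 : (1 + ‖z‖) ^ r ≤ (1 + R') ^ r :=
      Real.rpow_le_rpow (by positivity) (by linarith) hr.le
    have h3 : w z ≤ M * (1 + R') ^ r * ((1 + ‖z‖) ^ r)⁻¹ := by
      rw [← div_eq_mul_inv, le_div_iff₀ (by positivity)]
      nlinarith [Real.rpow_pos_of_pos (show (0:ℝ) < 1 + ‖z‖ by positivity) r]
    exact h3.trans (mul_le_mul_of_nonneg_right (le_max_left _ _) (by positivity))
  · push_neg at hcase
    have hz1 : (1 : ℝ) ≤ ‖z‖ := le_trans hR'1 hcase.le
    have hz0 : (0 : ℝ) < ‖z‖ := by linarith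
    have hzC : z ∉ C := by
      intro hz
      have h := hR hz
      rw [mem_closedBall, dist_zero_right] at h
      have : R ≤ R' := le_max_left _ _
      linarith
    have hbound : w z * ‖z‖ ^ r < c₀ + 1 := hCsub hzC
    have hzr : (0 : ℝ) < ‖z‖ ^ r := Real.rpow_pos_of_pos hz0 r
    have key : (1 + ‖z‖) ^ r ≤ 2 ^ r * ‖z‖ ^ r := by
      rw [← Real.mul_rpow (by norm_num) (norm_nonneg z)]
      exact Real.rpow_le_rpow (by positivity) (by linarith) hr.le
    have h3 : w z ≤ (c₀ + 1) * 2 ^ r * ((1 + ‖z‖) ^ r)⁻¹ := by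
      rw [← div_eq_mul_inv, le_div_iff₀ (by positivity)]
      nlinarith [Real.rpow_pos_of_pos (show (0:ℝ) < 1 + ‖z‖ by positivity) r,
        Real.rpow_pos_of_pos (show (0:ℝ) < 2 by norm_num) r]
    exact h3.trans (mul_le_mul_of_nonneg_right (le_max_right _ _) (by positivity))

lemma int_of_bound {N : ℕ} {g : EucN N → ℝ} (hgc : Continuous g) {K t : ℝ} (ht : (N : ℝ) < t)
    (hbd : ∀ z, |g z| ≤ K * ((1 + ‖z‖) ^ t)⁻¹) : Integrable g := by
  have h0 : Integrable (fun z : EucN N => ((1 + ‖z‖) ^ t)⁻¹) := by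
    have := integrable_one_add_norm (E := EucN N) (μ := volume) (r := t)
      (by rw [finrank_euclideanSpace_fin]; exact ht)
    apply this.congr
    filter_upwards with x
    rw [Real.rpow_neg (by positivity)]
  exact (h0.const_mul K).mono' hgc.aestronglyMeasurable
    (ae_of_all _ fun z => by simpa [Real.norm_eq_abs] using hbd z)

lemma integral_comp_smul_sub {N : ℕ} (g : EucN N → ℝ) {c : ℝ} (hc : 0 < c) (b : EucN N) :
    ∫ y : EucN N, g (c • y - b) = ((c ^ N)⁻¹ : ℝ) * ∫ y : EucN N, g y := by
  have h1 : ∫ y : EucN N, g (c • y - b) = ∫ y : EucN N, g (c • y) := by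
    rw [← integral_add_right_eq_self (μ := volume) (fun y : EucN N => g (c • y - b)) (c⁻¹ • b)]
    congr 1
    ext y
    congr 1
    rw [smul_add, smul_smul, mul_inv_cancel₀ hc.ne', one_smul]
    abel
  rw [h1, Measure.integral_comp_smul volume g c, finrank_euclideanSpace_fin, smul_eq_mul,
    abs_of_nonneg (by positivity)]

lemma integrable_comp_smul_sub {N : ℕ} {g : EucN N → ℝ} (hg : Integrable g) {c : ℝ} (hc : c ≠ 0)
    (b : EucN N) : Integrable fun y : EucN N => g (c • y - b) := by
  have h1 : Integrable fun x : EucN N => g (x - b) := hg.comp_sub_right b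
  exact (integrable_comp_smul_iff volume (fun x : EucN N => g (x - b)) hc).mpr h1

set_option maxHeartbeats 2000000 in
lemma keylim {N : ℕ} {w : EucN N → ℝ} {c₀ r p : ℝ} (hwc : Continuous w) (hwpos : ∀ x, 0 < w x)
    (hwbdd : ∃ M, ∀ x, |w x| ≤ M) (hc₀ : 0 < c₀) (hr0 : 0 < r) (hrN : (N : ℝ) < r)
    (hp : 1 < p) (hpr : (N : ℝ) < p * r)
    (hdecay : Tendsto (fun x : EucN N => w x * ‖x‖ ^ r) (cocompact (EucN N)) (𝓝 c₀))
    {c μ : ℝ} (hc : 0 < c) (hμ : 0 < μ) :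
    Tendsto (fun q : EucN N => ‖q‖ ^ r * ∫ y : EucN N, w y ^ p * w (c • y - μ • q))
      (comap (fun q : EucN N => ‖q‖) atTop)
      (𝓝 (c₀ * (μ ^ r)⁻¹ * ∫ y : EucN N, w y ^ p)) := by
  obtain ⟨K, hK, hKb⟩ := bound_K hr0 hc₀ hwpos hwbdd hdecay
  have hp0 : (0 : ℝ) ≤ p := by linarith
  have hwpc : Continuous fun y : EucN N => w y ^ p := hwc.rpow_const fun x => Or.inr hp0
  have hw_int : Integrable w := int_of_bound hwc hrN fun z => by
    rw [abs_of_pos (hwpos z)]; exact hKb z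
  have hwp_int : Integrable (fun y : EucN N => w y ^ p) := by
    apply int_of_bound hwpc (t := r * p) (by rwa [mul_comm])
    intro z
    rw [abs_of_pos (Real.rpow_pos_of_pos (hwpos z) p)]
    calc w z ^ p ≤ (K * ((1 + ‖z‖) ^ r)⁻¹) ^ p :=
          Real.rpow_le_rpow (hwpos z).le (hKb z) hp0
      _ = K ^ p * ((1 + ‖z‖) ^ (r * p))⁻¹ := by
          have hx : (0 : ℝ) ≤ 1 + ‖z‖ := by positivity
          rw [Real.mul_rpow hK.le (by positivity)]
          congr 1
          rw [← Real.rpow_neg hx r, ← Real.rpow_mul hx, ← Real.rpow_neg hx (r * p), neg_mul]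
  have hwA : ∀ z : EucN N, w z ≤ K := by
    intro z
    refine (hKb z).trans ?_
    have h1 : (1 : ℝ) ≤ (1 + ‖z‖) ^ r :=
      Real.one_le_rpow (by linarith [norm_nonneg z]) hr0.le
    have h2 : ((1 + ‖z‖) ^ r)⁻¹ ≤ 1 := by
      rw [inv_le_one_iff₀]
      right; exact h1
    calc K * ((1 + ‖z‖) ^ r)⁻¹ ≤ K * 1 := mul_le_mul_of_nonneg_left h2 hK.le
      _ = K := mul_one K
  set l := comap (fun q : EucN N => ‖q‖) atTop with hl
  have ht : Tendsto (fun q : EucN N => ‖q‖) l atTop := tendsto_comap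
  set f : EucN N → EucN N → ℝ :=
    fun q y => w y ^ p * (w (c • y - μ • q) * ‖q‖ ^ r) with hf
  have hfnn : ∀ q y, 0 ≤ f q y := fun q y => by
    have h0 := (hwpos (c • y - μ • q)).le
    have h1 : (0:ℝ) ≤ w y ^ p := Real.rpow_nonneg (hwpos y).le p
    have h2 : (0:ℝ) ≤ ‖q‖ ^ r := Real.rpow_nonneg (norm_nonneg q) r
    rw [hf]; dsimp only; positivity
  set S : EucN N → Set (EucN N) := fun q => {y : EucN N | c * ‖y‖ ≤ μ * ‖q‖ / 2} with hS
  have hSm : ∀ q, MeasurableSet (S q) := fun q =>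
    (isClosed_le (continuous_const.mul continuous_norm) continuous_const).measurableSet
  have hfc : ∀ q, Continuous (f q) := fun q =>
    hwpc.mul (((hwc.comp ((continuous_id.const_smul c).sub continuous_const)).mul
      continuous_const))
  have hfint : ∀ q, Integrable (f q) := by
    intro q
    refine ((hwp_int.mul_const (K * ‖q‖ ^ r)).mono' (hfc q).aestronglyMeasurable
      (ae_of_all _ fun y => ?_))
    rw [Real.norm_eq_abs, abs_of_nonneg (hfnn q y)]
    have h2 : (0:ℝ) ≤ ‖q‖ ^ r := Real.rpow_nonneg (norm_nonneg q) r
    have h1 : w (c • y - μ • q) * ‖q‖ ^ r ≤ K * ‖q‖ ^ r := by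
      have := hwA (c • y - μ • q)
      nlinarith
    have h3 : (0:ℝ) ≤ w y ^ p := Real.rpow_nonneg (hwpos y).le p
    rw [hf]
    dsimp only
    nlinarith [h1, h3]
  have hcore : ∀ q z : EucN N, 0 < ‖q‖ → μ * ‖q‖ / 2 ≤ ‖z‖ →
      w z * ‖q‖ ^ r ≤ K * ((μ / 2) ^ r)⁻¹ := by
    intro q z hq hz
    have hqr : (0 : ℝ) < ‖q‖ ^ r := Real.rpow_pos_of_pos hq r
    have h1 : w z ≤ K * ((μ / 2 * ‖q‖) ^ r)⁻¹ := by
      refine (hKb z).trans ?_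
      have h2 : (μ / 2 * ‖q‖) ^ r ≤ (1 + ‖z‖) ^ r :=
        Real.rpow_le_rpow (by positivity) (by nlinarith [norm_nonneg z]) hr0.le
      have h3 : (0 : ℝ) < (μ / 2 * ‖q‖) ^ r := Real.rpow_pos_of_pos (by positivity) r
      gcongr
    calc w z * ‖q‖ ^ r ≤ (K * ((μ / 2 * ‖q‖) ^ r)⁻¹) * ‖q‖ ^ r :=
          mul_le_mul_of_nonneg_right h1 hqr.le
      _ = K * ((μ / 2) ^ r)⁻¹ := by
          have h4 : (0 : ℝ) < (μ / 2) ^ r := Real.rpow_pos_of_pos (by positivity) r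
          rw [Real.mul_rpow (by positivity) (norm_nonneg q)]
          field_simp
  have hsplit : ∀ q : EucN N, ‖q‖ ^ r * ∫ y : EucN N, w y ^ p * w (c • y - μ • q) =
      (∫ y : EucN N, (S q).indicator (f q) y) + ∫ y : EucN N, ((S q)ᶜ).indicator (f q) y := by
    intro q
    rw [integral_indicator (hSm q), integral_indicator (hSm q).compl,
      integral_add_compl (hSm q) (hfint q), ← integral_const_mul]
    exact integral_congr_ae (ae_of_all _ fun y => by rw [hf]; dsimp only; ring)
  have hG1 : Tendsto (fun q : EucN N => ∫ y : EucN N, (S q).indicator (f q) y) l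
      (𝓝 (∫ y : EucN N, w y ^ p * (c₀ * (μ ^ r)⁻¹))) := by
    refine tendsto_integral_filter_of_dominated_convergence
      (fun y => w y ^ p * (K * ((μ / 2) ^ r)⁻¹)) ?_ ?_ (hwp_int.mul_const _) ?_
    · exact Eventually.of_forall fun q => ((hfc q).aestronglyMeasurable).indicator (hSm q)
    · filter_upwards [ht.eventually_gt_atTop 0] with q hq
      refine ae_of_all _ fun y => ?_
      rw [Real.norm_eq_abs, abs_of_nonneg (indicator_nonneg (fun y _ => hfnn q y) y)]
      by_cases hy : y ∈ S q
      · rw [indicator_of_mem hy]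
        have hz : μ * ‖q‖ / 2 ≤ ‖c • y - μ • q‖ := by
          have h1 := norm_sub_norm_le (μ • q) (c • y)
          rw [norm_smul, norm_smul, Real.norm_eq_abs, Real.norm_eq_abs, abs_of_pos hμ,
            abs_of_pos hc, norm_sub_rev] at h1
          have h2 : c * ‖y‖ ≤ μ * ‖q‖ / 2 := hy
          linarith
        exact mul_le_mul_of_nonneg_left (hcore q _ hq hz) (Real.rpow_nonneg (hwpos y).le p)
      · rw [indicator_of_notMem hy]
        have h4 : (0 : ℝ) < (μ / 2) ^ r := Real.rpow_pos_of_pos (by positivity) r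
        have h5 : (0 : ℝ) ≤ w y ^ p := Real.rpow_nonneg (hwpos y).le p
        positivity
    · refine ae_of_all _ fun y => ?_
      have hev : ∀ᶠ q in l, y ∈ S q := by
        filter_upwards [ht.eventually_ge_atTop (2 * (c * ‖y‖) / μ)] with q hq
        have h1 : 2 * (c * ‖y‖) ≤ ‖q‖ * μ := (div_le_iff₀ hμ).mp hq
        show c * ‖y‖ ≤ μ * ‖q‖ / 2
        linarith
      have h1 := (tendsto_const_nhds (x := w y ^ p)).mul (ptwise hdecay hr0.le hμ (c • y))
      apply h1.congr'
      filter_upwards [hev] with q hq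
      exact (indicator_of_mem hq (f q)).symm
  have hCb0 : (0 : ℝ) < K * ((μ / 2) ^ r)⁻¹ := by
    have h4 : (0 : ℝ) < (μ / 2) ^ r := Real.rpow_pos_of_pos (by positivity) r
    positivity
  set D := μ / (2 * c) with hD
  have hD0 : 0 < D := by positivity
  set Cb := K * ((μ / 2) ^ r)⁻¹ with hCb
  set E := K ^ p * (D ^ (r * p))⁻¹ with hE
  have hE0 : 0 < E := by
    have h1 : (0 : ℝ) < D ^ (r * p) := Real.rpow_pos_of_pos hD0 _
    have h2 : (0 : ℝ) < K ^ p := Real.rpow_pos_of_pos hK _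
    positivity
  set W₀ := ((c : ℝ) ^ N)⁻¹ * ∫ y : EucN N, w y with hW
  have hW0 : 0 ≤ W₀ := mul_nonneg (by positivity) (integral_nonneg fun y => (hwpos y).le)
  set TT : ℝ → ℝ := fun ρ => ∫ y in {y : EucN N | ρ ≤ ‖y‖}, w y ^ p with hTT
  have hTT0 : Tendsto TT atTop (𝓝 0) := tail_tendsto_zero hwp_int
  set U : ℝ → ℝ := fun t => Cb * TT (D * t) + E * t ^ (r - r * p) * W₀ with hU
  have hUlim : Tendsto U atTop (𝓝 0) := by
    have h1 : Tendsto (fun t : ℝ => Cb * TT (D * t)) atTop (𝓝 0) := by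
      have := (hTT0.comp (tendsto_id.const_mul_atTop hD0)).const_mul Cb
      simpa using this
    have h2 : Tendsto (fun t : ℝ => E * t ^ (r - r * p) * W₀) atTop (𝓝 0) := by
      have h3 : Tendsto (fun t : ℝ => t ^ (r - r * p)) atTop (𝓝 0) := by
        have he : r - r * p = -(r * p - r) := by ring
        rw [he]; exact tendsto_rpow_neg_atTop (by nlinarith)
      have := (h3.const_mul E).mul_const W₀
      simpa using this
    simpa using h1.add h2
  have hG2 : Tendsto (fun q : EucN N => ∫ y : EucN N, ((S q)ᶜ).indicator (f q) y) l (𝓝 0) := by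
    apply tendsto_of_tendsto_of_tendsto_of_le_of_le' tendsto_const_nhds (hUlim.comp ht)
    · exact Eventually.of_forall fun q =>
        integral_nonneg (fun y => indicator_nonneg (fun y _ => hfnn q y) y)
    · filter_upwards [ht.eventually_ge_atTop 1] with q hq1
      have hq0 : (0 : ℝ) < ‖q‖ := lt_of_lt_of_le one_pos hq1
      set Tq : Set (EucN N) := {y : EucN N | D * ‖q‖ ≤ ‖y‖} with hTq
      have hTqm : MeasurableSet Tq :=
        (isClosed_le continuous_const continuous_norm).measurableSet
      have hptbd : ∀ y, ((S q)ᶜ).indicator (f q) y ≤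
          Cb * Tq.indicator (fun y : EucN N => w y ^ p) y +
            (E * ‖q‖ ^ (r - r * p)) * w (c • y - μ • q) := by
        intro y
        have hz0 := (hwpos (c • y - μ • q)).le
        have hqe : (0 : ℝ) ≤ ‖q‖ ^ (r - r * p) := Real.rpow_nonneg (norm_nonneg q) _
        have hsecond : 0 ≤ (E * ‖q‖ ^ (r - r * p)) * w (c • y - μ • q) := by positivity
        have hindnn : 0 ≤ Cb * Tq.indicator (fun y : EucN N => w y ^ p) y :=
          mul_nonneg hCb0.le
            (indicator_nonneg (fun y _ => Real.rpow_nonneg (hwpos y).le p) y)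
        by_cases hy : y ∈ (S q)ᶜ
        · rw [indicator_of_mem hy]
          have hyS : ¬ (c * ‖y‖ ≤ μ * ‖q‖ / 2) := hy
          push_neg at hyS
          have hyT : y ∈ Tq := by
            show D * ‖q‖ ≤ ‖y‖
            rw [hD, div_mul_eq_mul_div, div_le_iff₀ (by positivity)]
            nlinarith
          rw [indicator_of_mem hyT]
          by_cases hzc : μ * ‖q‖ / 2 ≤ ‖c • y - μ • q‖
          · have h2 : f q y ≤ Cb * w y ^ p := by
              rw [hf]; dsimp only
              calc w y ^ p * (w (c • y - μ • q) * ‖q‖ ^ r) ≤ w y ^ p * (K * ((μ / 2) ^ r)⁻¹) :=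
                    mul_le_mul_of_nonneg_left (hcore q _ hq0 hzc)
                      (Real.rpow_nonneg (hwpos y).le p)
                _ = Cb * w y ^ p := by rw [hCb]; ring
            linarith
          · push_neg at hzc
            have hwy : w y ≤ K * ((D * ‖q‖) ^ r)⁻¹ := by
              refine (hKb y).trans ?_
              have h3 : D * ‖q‖ ≤ ‖y‖ := hyT
              have h2 : (D * ‖q‖) ^ r ≤ (1 + ‖y‖) ^ r := by
                refine Real.rpow_le_rpow (by positivity) ?_ hr0.le
                linarith
              have h4 : (0 : ℝ) < (D * ‖q‖) ^ r := Real.rpow_pos_of_pos (by positivity) r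
              gcongr
            have hwyp : w y ^ p ≤ E * (‖q‖ ^ (r * p))⁻¹ := by
              calc w y ^ p ≤ (K * ((D * ‖q‖) ^ r)⁻¹) ^ p :=
                    Real.rpow_le_rpow (hwpos y).le hwy hp0
                _ = E * (‖q‖ ^ (r * p))⁻¹ := by
                    have hx : (0 : ℝ) ≤ D * ‖q‖ := by positivity
                    rw [Real.mul_rpow hK.le (by positivity), ← Real.rpow_neg hx r,
                      ← Real.rpow_mul hx, neg_mul, Real.rpow_neg hx,
                      Real.mul_rpow hD0.le (norm_nonneg q), mul_inv, hE]
                    ring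
            have h3 : f q y ≤ (E * ‖q‖ ^ (r - r * p)) * w (c • y - μ • q) := by
              rw [hf]; dsimp only
              have h4 : w y ^ p * (w (c • y - μ • q) * ‖q‖ ^ r) ≤
                  (E * (‖q‖ ^ (r * p))⁻¹) * (w (c • y - μ • q) * ‖q‖ ^ r) :=
                mul_le_mul_of_nonneg_right hwyp
                  (mul_nonneg hz0 (Real.rpow_nonneg (norm_nonneg q) r))
              refine h4.trans (le_of_eq ?_)
              rw [Real.rpow_sub hq0]
              have h5 : (0 : ℝ) < ‖q‖ ^ (r * p) := Real.rpow_pos_of_pos hq0 _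
              field_simp
            have h6 : 0 ≤ Cb * w y ^ p :=
              mul_nonneg hCb0.le (Real.rpow_nonneg (hwpos y).le p)
            linarith
        · rw [indicator_of_notMem hy]
          linarith
      have hint2 : Integrable (fun y : EucN N =>
          Cb * Tq.indicator (fun y : EucN N => w y ^ p) y +
          (E * ‖q‖ ^ (r - r * p)) * w (c • y - μ • q)) :=
        ((hwp_int.indicator hTqm).const_mul Cb).add
          ((integrable_comp_smul_sub hw_int hc.ne' (μ • q)).const_mul _)
      have hle := integral_mono ((hfint q).indicator (hSm q).compl) hint2 hptbd
      refine hle.trans (le_of_eq ?_)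
      rw [integral_add ((hwp_int.indicator hTqm).const_mul Cb)
        ((integrable_comp_smul_sub hw_int hc.ne' (μ • q)).const_mul _),
        integral_const_mul, integral_const_mul, integral_indicator hTqm,
        integral_comp_smul_sub w hc (μ • q), ← hW]
      rfl
  have hfinal := hG1.add hG2
  rw [add_zero] at hfinal
  have heq : (∫ y : EucN N, w y ^ p * (c₀ * (μ ^ r)⁻¹)) =
      c₀ * (μ ^ r)⁻¹ * ∫ y : EucN N, w y ^ p := by
    rw [integral_mul_const, mul_comm]
  rw [heq] at hfinal
  exact hfinal.congr fun q => (hsplit q).symm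

/-- Interaction estimate: as `|q_i - q_j| → ∞`,
`∫ w_{λ_j}(x-q_j)^p w_{λ_i}(x-q_i) dx
  = c₀ λ_i^{1/(p-1)-(N+2s)/(2s)} λ_j^{p/(p-1)-N/(2s)} (∫w^p) |q_i-q_j|^{-(N+2s)} (1+o(1))`. -/
theorem stmt18 {N : ℕ} (s p : ℝ) (hs : 0 < s) (hs1 : s < 1) (hp : 1 < p)
    (hpN : (N : ℝ) < p * ((N : ℝ) + 2 * s))
    (w : EucN N → ℝ) (hwc : Continuous w) (hwpos : ∀ x, 0 < w x)
    (hwrad : ∀ x y : EucN N, ‖x‖ = ‖y‖ → w x = w y)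
    (hwbdd : ∃ M, ∀ x, |w x| ≤ M)
    (c₀ : ℝ) (hc₀ : 0 < c₀)
    (hdecay : Tendsto (fun x : EucN N => w x * ‖x‖ ^ ((N : ℝ) + 2 * s))
      (cocompact (EucN N)) (𝓝 c₀))
    (li lj : ℝ) (hli : 0 < li) (hlj : 0 < lj) :
    Tendsto
      (fun qq : EucN N × EucN N =>
        ‖qq.1 - qq.2‖ ^ ((N : ℝ) + 2 * s) *
          ∫ x : EucN N, wlam s p w lj (x - qq.2) ^ p * wlam s p w li (x - qq.1))
      (comap (fun qq : EucN N × EucN N => ‖qq.1 - qq.2‖) atTop)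
      (𝓝 (c₀ * li ^ (1 / (p - 1) - ((N : ℝ) + 2 * s) / (2 * s))
        * lj ^ (p / (p - 1) - (N : ℝ) / (2 * s)) * ∫ x : EucN N, w x ^ p)) := by
  set r : ℝ := (N : ℝ) + 2 * s with hr
  set a : ℝ := 1 / (p - 1) with ha
  set μi : ℝ := li ^ (1 / (2 * s)) with hμi
  set μj : ℝ := lj ^ (1 / (2 * s)) with hμj
  have hμi0 : 0 < μi := Real.rpow_pos_of_pos hli _
  have hμj0 : 0 < μj := Real.rpow_pos_of_pos hlj _
  set c : ℝ := μi / μj with hc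
  have hc0 : 0 < c := by positivity
  have hr0 : 0 < r := by rw [hr]; positivity
  have hrN : (N : ℝ) < r := by rw [hr]; nlinarith
  have hcμ : c * μj = μi := div_mul_cancel₀ μi hμj0.ne'
  have hp1 : p - 1 ≠ 0 := by intro h; nlinarith
  -- pointwise rewriting of the integrand
  have hptw : ∀ qi qj x : EucN N, wlam s p w lj (x - qj) ^ p * wlam s p w li (x - qi)
      = (lj ^ (a * p) * li ^ a) * (w (μj • (x - qj)) ^ p * w (μi • (x - qi))) := by
    intro qi qj x
    simp only [wlam, ← hμi, ← hμj, ← ha]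
    rw [Real.mul_rpow (Real.rpow_nonneg hlj.le _) (hwpos _).le, ← Real.rpow_mul hlj.le]
    ring
  -- change of variables
  have hcv : ∀ qi qj : EucN N, ∫ x : EucN N, w (μj • (x - qj)) ^ p * w (μi • (x - qi))
      = ((μj ^ N : ℝ))⁻¹ * ∫ y : EucN N, w y ^ p * w (c • y - μi • (qi - qj)) := by
    intro qi qj
    have h1 : ∀ x : EucN N, w (μj • (x - qj)) ^ p * w (μi • (x - qi))
        = (fun z : EucN N => w (μj • z) ^ p * w (c • (μj • z) - μi • (qi - qj))) (x - qj) := by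
      intro x
      dsimp only
      congr 3
      rw [smul_smul, hcμ, ← smul_sub]
      congr 1
      abel
    rw [integral_congr_ae (ae_of_all _ h1),
      integral_sub_right_eq_self (fun z : EucN N => w (μj • z) ^ p *
        w (c • (μj • z) - μi • (qi - qj))) qj]
    have h2 := Measure.integral_comp_smul (volume : Measure (EucN N))
      (fun y : EucN N => w y ^ p * w (c • y - μi • (qi - qj))) μj
    rw [h2, finrank_euclideanSpace_fin, smul_eq_mul, abs_of_nonneg (by positivity)]
  have hI : ∀ qi qj : EucN N,
      (∫ x : EucN N, wlam s p w lj (x - qj) ^ p * wlam s p w li (x - qi))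
      = (lj ^ (a * p) * li ^ a) *
        (((μj ^ N : ℝ))⁻¹ * ∫ y : EucN N, w y ^ p * w (c • y - μi • (qi - qj))) := by
    intro qi qj
    rw [integral_congr_ae (ae_of_all _ (hptw qi qj)), integral_const_mul, hcv qi qj]
  have hkey := keylim (N := N) hwc hwpos hwbdd hc₀ hr0 hrN hp (by rw [hr]; exact hpN) hdecay
    hc0 hμi0
  have hsub : Tendsto (fun qq : EucN N × EucN N => qq.1 - qq.2)
      (comap (fun qq : EucN N × EucN N => ‖qq.1 - qq.2‖) atTop)
      (comap (fun q : EucN N => ‖q‖) atTop) := by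
    rw [tendsto_comap_iff]
    exact tendsto_comap
  set Cst : ℝ := (lj ^ (a * p) * li ^ a) * ((μj ^ N : ℝ))⁻¹ with hCst
  have hcomp := (hkey.const_mul Cst).comp hsub
  have hfinal : Tendsto
      (fun qq : EucN N × EucN N =>
        ‖qq.1 - qq.2‖ ^ r *
          ∫ x : EucN N, wlam s p w lj (x - qq.2) ^ p * wlam s p w li (x - qq.1))
      (comap (fun qq : EucN N × EucN N => ‖qq.1 - qq.2‖) atTop)
      (𝓝 (Cst * (c₀ * (μi ^ r)⁻¹ * ∫ y : EucN N, w y ^ p))) := by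
    apply hcomp.congr
    intro qq
    show Cst * (‖qq.1 - qq.2‖ ^ r *
      ∫ y : EucN N, w y ^ p * w (c • y - μi • (qq.1 - qq.2))) = _
    rw [hI qq.1 qq.2, hCst]
    ring
  have hμir : (μi : ℝ) ^ r = li ^ (r / (2 * s)) := by
    rw [hμi, ← Real.rpow_mul hli.le]
    congr 1
    field_simp
  have hμjN : (μj : ℝ) ^ N = lj ^ ((N : ℝ) / (2 * s)) := by
    rw [hμj, ← Real.rpow_natCast (lj ^ (1 / (2 * s))) N, ← Real.rpow_mul hlj.le]
    congr 1
    field_simp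
  have hconst : Cst * (c₀ * (μi ^ r)⁻¹ * ∫ y : EucN N, w y ^ p)
      = c₀ * li ^ (1 / (p - 1) - ((N : ℝ) + 2 * s) / (2 * s))
        * lj ^ (p / (p - 1) - (N : ℝ) / (2 * s)) * ∫ x : EucN N, w x ^ p := by
    rw [hCst, hμir, hμjN, ← Real.rpow_neg hlj.le, ← Real.rpow_neg hli.le,
      show 1 / (p - 1) - ((N : ℝ) + 2 * s) / (2 * s) = a + (-(r / (2 * s))) by
        rw [ha, hr]; ring,
      show p / (p - 1) - (N : ℝ) / (2 * s) = a * p + (-((N : ℝ) / (2 * s))) by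
        rw [ha]; field_simp; ring,
      Real.rpow_add hli, Real.rpow_add hlj]
    ring
  rw [hconst] at hfinal
  exact hfinal
end
end
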